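/- Let D be a digraph of order n, let C be a non-Hamiltonian directed cycle in D, and let x be a vertex not on C. Assume that D contains a directed path from C to x and a directed path from x to C, and that D contains no C-bypass through x. Then: (i) if x is adjacent to some vertex y of C, then D is not 2-strongly connected, d(x, V(C) ∖ {y}) = 0, and d(x) + d(z) ≤ 2n − 2 for all vertices z ∈ V(C) ∖ {y}; (ii) if x is adjacent to no vertex of C, let P be a shortest path from C to x meeting C only in a vertex u, and let Q be a shortest path from x to C meeting C only in a vertex v; if u ≠ v then d(x) + d(z) ≤ 2n − 2 for all vertices z ∈ V(C), except possibly one vertex from {u, v}; if u = v then d(x) + d(z) ≤ 2n − 2 for all vertices z ∈ V(C) ∖ {u}. -/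

import Mathlib

/-!
Basic definitions for finite digraphs (no loops, no multiple arcs), where the arc
relation is `A : V → V → Prop`.  Paths and cycles are given as lists of (distinct)
vertices.
-/

variable {V : Type*}

/-- A (directed) path, given by the list of its vertices. -/
def IsPathOn (A : V → V → Prop) (l : List V) : Prop :=
  l ≠ [] ∧ l.Nodup ∧ l.Chain' A

/-- A (directed) cycle, given by the list of its vertices; its length (number of
arcs) equals the length of the list. -/
def IsCycleOn (A : V → V → Prop) (l : List V) : Prop :=
  2 ≤ l.length ∧ l.Nodup ∧ l.Chain' A ∧
    ∀ a ∈ l.getLast?, ∀ b ∈ l.head?, A a b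

/-- A directed path from `a` to `b`. -/
def IsPathFromTo (A : V → V → Prop) (l : List V) (a b : V) : Prop :=
  IsPathOn A l ∧ l.head? = some a ∧ l.getLast? = some b

/-- Out-degree `d⁺(x)`. -/
noncomputable def outDeg (A : V → V → Prop) (x : V) : ℕ := {y | A x y}.ncard

/-- In-degree `d⁻(x)`. -/
noncomputable def inDeg (A : V → V → Prop) (x : V) : ℕ := {y | A y x}.ncard

/-- Degree `d(x) = d⁺(x) + d⁻(x)`. -/
noncomputable def deg (A : V → V → Prop) (x : V) : ℕ := outDeg A x + inDeg A x

/-- Out-degree into a set, `d⁺(x, S)`. -/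
noncomputable def outDegOn (A : V → V → Prop) (x : V) (S : Set V) : ℕ :=
  {y ∈ S | A x y}.ncard

/-- In-degree from a set, `d⁻(x, S)`. -/
noncomputable def inDegOn (A : V → V → Prop) (x : V) (S : Set V) : ℕ :=
  {y ∈ S | A y x}.ncard

/-- Degree with respect to a set, `d(x, S) = d⁺(x, S) + d⁻(x, S)`. -/
noncomputable def degOn (A : V → V → Prop) (x : V) (S : Set V) : ℕ :=
  outDegOn A x S + inDegOn A x S

/-- Two distinct vertices are adjacent if there is an arc between them in some
direction. -/
def DAdj (A : V → V → Prop) (x y : V) : Prop := A x y ∨ A y x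

/-- `D` is `S`-strongly connected: between any two distinct vertices of `S` there
are directed paths in both directions. -/
def SetStronglyConnected (A : V → V → Prop) (S : Set V) : Prop :=
  ∀ x ∈ S, ∀ y ∈ S, x ≠ y → ∃ l, IsPathFromTo A l x y

/-- Strong connectivity. -/
def StronglyConnected (A : V → V → Prop) : Prop :=
  ∀ x y : V, x ≠ y → ∃ l, IsPathFromTo A l x y

/-- 2-strong connectivity: at least 3 vertices, and deleting any vertex leaves a
strongly connected digraph. -/
def TwoStronglyConnected [Fintype V] (A : V → V → Prop) : Prop :=
  3 ≤ Fintype.card V ∧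
    ∀ w x y : V, x ≠ w → y ≠ w → x ≠ y → ∃ l, IsPathFromTo A l x y ∧ w ∉ l

/-- Condition `A₀` for a set `Y` of vertices. -/
def CondA0 [Fintype V] (A : V → V → Prop) (Y : Set V) : Prop :=
  ∀ x ∈ Y, ∀ y ∈ Y, ∀ z ∈ Y,
    x ≠ y → x ≠ z → y ≠ z → ¬ DAdj A x y →
      (¬ A x z →
        deg A x + deg A y + outDeg A x + inDeg A z ≥ 3 * Fintype.card V - 2) ∧
      (¬ A z x →
        deg A x + deg A y + inDeg A x + outDeg A z ≥ 3 * Fintype.card V - 2)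

/-- A `C`-bypass: a path of length at least two whose end-vertices lie on the
cycle `c` and whose internal vertices avoid `c`. -/
def IsBypass (A : V → V → Prop) (c p : List V) : Prop :=
  IsPathOn A p ∧ 3 ≤ p.length ∧
    (∀ a ∈ p.head?, a ∈ c) ∧ (∀ b ∈ p.getLast?, b ∈ c) ∧
    ∀ v ∈ p.tail.dropLast, v ∉ c

/-- The vertex `y` can be inserted into the path `p`. -/
def CanInsert (A : V → V → Prop) (p : List V) (y : V) : Prop :=
  ∃ i, ∃ h : i + 1 < p.length, A (p[i]'(Nat.lt_of_succ_lt h)) y ∧ A y (p[i+1]'h)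

/-- A `(C, x)`-path: a path from a vertex `u` of the cycle `c` to `x`, meeting `c`
only in `u`. -/
def IsCtoXPath (A : V → V → Prop) (c l : List V) (u x : V) : Prop :=
  IsPathFromTo A l u x ∧ u ∈ c ∧ ∀ v ∈ l, v ∈ c → v = u

/-- An `(x, C)`-path: a path from `x` to a vertex `v` of the cycle `c`, meeting `c`
only in `v`. -/
def IsXtoCPath (A : V → V → Prop) (c l : List V) (x v : V) : Prop :=
  IsPathFromTo A l x v ∧ v ∈ c ∧ ∀ w ∈ l, w ∈ c → w = v

section Infra

open List

variable {A : V → V → Prop} {c : List V} {x : V}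

/-- Every `CtoX` path has the shape `(u :: m) ++ [x]`, with internals `m` off `c`. -/
lemma ctox_elim (hx : x ∉ c) {l : List V} {u : V} (h : IsCtoXPath A c l u x) :
    ∃ m, l = (u :: m) ++ [x] ∧ u ∈ c ∧ (∀ w ∈ m, w ∉ c) ∧
      l.Nodup ∧ l.Chain' A ∧ x ∉ m ∧ u ∉ m ∧ u ≠ x := by
  obtain ⟨⟨⟨hne, hnd, hch⟩, hhead, hlast⟩, huc, honly⟩ := h
  have hux : u ≠ x := fun h => hx (h ▸ huc)
  cases l with
  | nil => simp at hhead
  | cons a t =>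
    simp only [head?_cons, Option.some.injEq] at hhead
    subst hhead
    have ht : t ≠ [] := by
      rintro rfl
      simp only [getLast?_singleton, Option.some.injEq] at hlast
      exact hux hlast
    have hlx : t.getLast ht = x := by
      rw [getLast?_cons, getLast?_eq_getLast ht] at hlast
      · exact Option.some.injEq _ _ ▸ hlast
    refine ⟨t.dropLast, ?_, huc, ?_, hnd, hch, ?_, ?_, hux⟩
    · have := dropLast_append_getLast ht
      rw [hlx] at this
      simp [this]
    · intro w hw hwc
      have hwt : w ∈ t := mem_of_mem_dropLast hw
      have := honly w (mem_cons_of_mem _ hwt) hwc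
      subst this
      exact (nodup_cons.1 hnd).1 hwt
    · intro hxm
      have : ¬ t.Nodup := by
        rw [← dropLast_append_getLast ht, hlx]
        simp [nodup_append, hxm]
      exact this (nodup_cons.1 hnd).2
    · intro hum
      exact (nodup_cons.1 hnd).1 (mem_of_mem_dropLast hum)

/-- Every `XtoC` path has the shape `(x :: m) ++ [v]`, with internals `m` off `c`. -/
lemma xtoc_elim (hx : x ∉ c) {l : List V} {v : V} (h : IsXtoCPath A c l x v) :
    ∃ m, l = (x :: m) ++ [v] ∧ v ∈ c ∧ (∀ w ∈ m, w ∉ c) ∧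
      l.Nodup ∧ l.Chain' A ∧ x ∉ m ∧ v ∉ m ∧ x ≠ v := by
  obtain ⟨⟨⟨hne, hnd, hch⟩, hhead, hlast⟩, hvc, honly⟩ := h
  have hux : x ≠ v := fun h => hx (h ▸ hvc)
  cases l with
  | nil => simp at hhead
  | cons a t =>
    simp only [head?_cons, Option.some.injEq] at hhead
    subst hhead
    have ht : t ≠ [] := by
      rintro rfl
      simp only [getLast?_singleton, Option.some.injEq] at hlast
      exact hux hlast
    have hlx : t.getLast ht = v := by
      rw [getLast?_cons, getLast?_eq_getLast ht] at hlast
      exact Option.some.injEq _ _ ▸ hlast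
    refine ⟨t.dropLast, ?_, hvc, ?_, hnd, hch, ?_, ?_, hux⟩
    · have := dropLast_append_getLast ht
      rw [hlx] at this
      simp [this]
    · intro w hw hwc
      have hwt : w ∈ t := mem_of_mem_dropLast hw
      have hwv := honly w (mem_cons_of_mem _ hwt) hwc
      rw [hwv] at hw
      have : ¬ t.Nodup := by
        rw [← dropLast_append_getLast ht, hlx]
        simp [nodup_append, hw]
      exact this (nodup_cons.1 hnd).2
    · intro hxm
      exact (nodup_cons.1 hnd).1 (mem_of_mem_dropLast hxm)
    · intro hvm
      have : ¬ t.Nodup := by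
        rw [← dropLast_append_getLast ht, hlx]
        simp [nodup_append, hvm]
      exact this (nodup_cons.1 hnd).2

end Infra
section Infra2

open List

variable {A : V → V → Prop} {c : List V} {x : V}

lemma ctox_intro (hx : x ∉ c) {u : V} {m : List V} (hu : u ∈ c)
    (hm : ∀ w ∈ m, w ∉ c) (hnd : ((u :: m) ++ [x]).Nodup)
    (hch : ((u :: m) ++ [x]).Chain' A) : IsCtoXPath A c ((u :: m) ++ [x]) u x := by
  refine ⟨⟨⟨by simp, hnd, hch⟩, by simp, by exact getLast?_concat⟩, hu, ?_⟩
  intro v hv hvc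
  have hv' : v = u ∨ v ∈ m ∨ v = x := by
    simpa using hv
  rcases hv' with rfl | hv' | rfl
  · rfl
  · exact absurd hvc (hm v hv')
  · exact absurd hvc hx

lemma xtoc_intro (hx : x ∉ c) {v : V} {m : List V} (hv : v ∈ c)
    (hm : ∀ w ∈ m, w ∉ c) (hnd : ((x :: m) ++ [v]).Nodup)
    (hch : ((x :: m) ++ [v]).Chain' A) : IsXtoCPath A c ((x :: m) ++ [v]) x v := by
  refine ⟨⟨⟨by simp, hnd, hch⟩, by simp, by exact getLast?_concat⟩, hv, ?_⟩
  intro w hw hwc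
  have hw' : w = x ∨ w ∈ m ∨ w = v := by
    simpa using hw
  rcases hw' with rfl | hw' | rfl
  · exact absurd hwc hx
  · exact absurd hwc (hm w hw')
  · rfl

lemma ctox_parts (hx : x ∉ c) {a : V} {mR : List V}
    (hR : IsCtoXPath A c ((a :: mR) ++ [x]) a x) :
    a ∈ c ∧ (∀ w ∈ mR, w ∉ c) ∧ ((a :: mR) ++ [x]).Nodup ∧
      ((a :: mR) ++ [x]).Chain' A ∧ x ∉ mR ∧ a ∉ mR ∧ a ≠ x := by
  obtain ⟨m, hm, h1, h2, h3, h4, h5, h6, h7⟩ := ctox_elim hx hR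
  have hmm : m = mR := by
    simpa using hm.symm
  subst hmm
  exact ⟨h1, h2, h3, h4, h5, h6, h7⟩

lemma xtoc_parts (hx : x ∉ c) {b : V} {mT : List V}
    (hT : IsXtoCPath A c ((x :: mT) ++ [b]) x b) :
    b ∈ c ∧ (∀ w ∈ mT, w ∉ c) ∧ ((x :: mT) ++ [b]).Nodup ∧
      ((x :: mT) ++ [b]).Chain' A ∧ x ∉ mT ∧ b ∉ mT ∧ x ≠ b := by
  obtain ⟨m, hm, h1, h2, h3, h4, h5, h6, h7⟩ := xtoc_elim hx hT
  have hmm : m = mT := by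
    simpa using hm.symm
  subst hmm
  exact ⟨h1, h2, h3, h4, h5, h6, h7⟩

/-- The key consequence of `hnobypass`: an in-route and an out-route with distinct
endpoints on `c` must share an internal vertex. -/
lemma route_meet (hx : x ∉ c) (hnb : ¬ ∃ p, IsBypass A c p ∧ x ∈ p)
    {a b : V} {mR mT : List V}
    (hR : IsCtoXPath A c ((a :: mR) ++ [x]) a x)
    (hT : IsXtoCPath A c ((x :: mT) ++ [b]) x b)
    (hab : a ≠ b) : ∃ w, w ∈ mR ∧ w ∈ mT := by
  obtain ⟨hac, hmRc, hndR, hchR, hxmR, hamR, hax⟩ := ctox_parts hx hR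
  obtain ⟨hbc, hmTc, hndT, hchT, hxmT, hbmT, hxb⟩ := xtoc_parts hx hT
  by_contra hdis
  push_neg at hdis
  apply hnb
  refine ⟨(a :: (mR ++ x :: mT)) ++ [b], ⟨⟨by simp, ?_, ?_⟩, ?_, by simpa using hac, ?_, ?_⟩, by simp⟩
  · -- Nodup
    have hamT : a ∉ mT := fun h => hmTc a h hac
    have hbmR : b ∉ mR := fun h => hmRc b h hbc
    have heq : (a :: (mR ++ x :: mT)) ++ [b] = (a :: mR) ++ ((x :: mT) ++ [b]) := by
      simp
    rw [heq, nodup_append]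
    refine ⟨hndR.sublist (prefix_append (a :: mR) [x]).sublist, hndT, ?_⟩
    intro w hw w' hw2 hne
    rw [← hne] at hw2
    have hw2' : w = x ∨ w ∈ mT ∨ w = b := by simpa using hw2
    rw [mem_cons] at hw
    rcases hw with rfl | hw
    · rcases hw2' with rfl | h | rfl
      · exact hax rfl
      · exact hamT h
      · exact hab rfl
    · rcases hw2' with rfl | h | rfl
      · exact hxmR hw
      · exact hdis w hw h
      · exact hbmR hw
  · -- Chain'
    have heq : (a :: (mR ++ x :: mT)) ++ [b] = (a :: mR) ++ ((x :: mT) ++ [b]) := by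
      simp
    rw [heq, Chain', isChain_append]
    refine ⟨hchR.prefix ⟨[x], rfl⟩, hchT, ?_⟩
    have := (isChain_append.1 hchR).2.2
    simpa using this
  · -- length
    simp only [length_append, length_cons, length_singleton]
    omega
  · -- getLast common
    intro b' hb'
    rw [getLast?_concat] at hb'
    simp only [Option.mem_def, Option.some.injEq] at hb'
    exact hb' ▸ hbc
  · -- internals off c
    intro w hw
    have : (a :: (mR ++ x :: mT)) ++ [b] = a :: ((mR ++ x :: mT) ++ [b]) := by simp
    rw [this] at hw
    simp only [tail_cons, dropLast_concat, mem_append, mem_cons] at hw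
    rcases hw with hw | rfl | hw
    · exact hmRc w hw
    · exact hx
    · exact hmTc w hw

end Infra2
section Infra3

open List

variable {A : V → V → Prop} {c : List V} {x : V}

/-- Extract an in-route from any path from a cycle vertex to `x`. -/
lemma exists_ctox_aux (hx : x ∉ c) :
    ∀ n (l : List V) (a : V), l.length ≤ n → a ∈ c → IsPathFromTo A l a x →
      ∃ u l', IsCtoXPath A c l' u x ∧ ∀ w ∈ l', w ∈ l := by
  intro n
  induction n with
  | zero =>
    intro l a hl ha h
    have := h.2.1
    cases l
    · simp at this
    · simp at hl
  | succ n ih =>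
    intro l a hl ha h
    obtain ⟨⟨hne, hnd, hch⟩, hhead, hlast⟩ := h
    have hl' : l = a :: l.tail := eq_cons_of_mem_head? (by simp [hhead])
    by_cases hint : ∃ b ∈ l.tail, b ∈ c
    · obtain ⟨b, hbt, hbc⟩ := hint
      obtain ⟨s, t, hst⟩ := append_of_mem hbt
      have hlst : l = (a :: s) ++ (b :: t) := by
        rw [hl', hst]; simp
      have hlen : (b :: t).length ≤ n := by
        have := congrArg List.length hlst
        simp only [length_append, length_cons] at this ⊢
        omega
      have hsub : ∀ w ∈ b :: t, w ∈ l := by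
        intro w hw; rw [hlst]; exact mem_append_right _ hw
      have hlast2 : (b :: t).getLast? = some x := by
        rw [hlst, getLast?_append] at hlast
        rcases ho : (b :: t).getLast? with _ | w
        · simp at ho
        · rw [ho] at hlast
          simp only [Option.some_or, Option.some.injEq] at hlast
          simp [hlast]
      obtain ⟨u, l', hl'', hsub'⟩ := ih (b :: t) b hlen hbc
        ⟨⟨by simp, hnd.sublist (by rw [hlst]; exact sublist_append_right _ _),
          hch.suffix ⟨a :: s, hlst.symm⟩⟩, by simp, hlast2⟩
      exact ⟨u, l', hl'', fun w hw => hsub _ (hsub' w hw)⟩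
    · push_neg at hint
      refine ⟨a, l, ⟨⟨⟨hne, hnd, hch⟩, hhead, hlast⟩, ha, ?_⟩, fun w hw => hw⟩
      intro v hv hvc
      rw [hl', mem_cons] at hv
      rcases hv with rfl | hv
      · rfl
      · exact absurd hvc (hint v hv)

lemma exists_ctox (hx : x ∉ c) {a : V} {l : List V} (ha : a ∈ c)
    (h : IsPathFromTo A l a x) :
    ∃ u l', IsCtoXPath A c l' u x ∧ ∀ w ∈ l', w ∈ l :=
  exists_ctox_aux hx l.length l a le_rfl ha h

/-- Extract an out-route from any path from `x` to a cycle vertex. -/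
lemma exists_xtoc_aux (hx : x ∉ c) :
    ∀ n (l : List V) (b : V), l.length ≤ n → b ∈ c → IsPathFromTo A l x b →
      ∃ v l', IsXtoCPath A c l' x v ∧ ∀ w ∈ l', w ∈ l := by
  intro n
  induction n with
  | zero =>
    intro l b hl hb h
    have := h.2.1
    cases l
    · simp at this
    · simp at hl
  | succ n ih =>
    intro l b hl hb h
    obtain ⟨⟨hne, hnd, hch⟩, hhead, hlast⟩ := h
    by_cases hint : ∃ w ∈ l.dropLast, w ∈ c
    · obtain ⟨w, hwt, hwc⟩ := hint
      obtain ⟨s, t, hst⟩ := append_of_mem (mem_of_mem_dropLast hwt)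
      have ht : t ≠ [] := by
        rintro rfl
        have hwl : w = l.getLast hne := by
          have : l.getLast? = some w := by rw [hst]; simp [getLast?_concat]
          rw [getLast?_eq_getLast hne] at this
          exact (Option.some.injEq _ _ ▸ this).symm
        have : l.dropLast ++ [w] = l := by
          rw [hwl]; exact dropLast_append_getLast hne
        have hnd' := hnd
        rw [← this, nodup_append] at hnd'
        exact hnd'.2.2 w hwt w (by simp) rfl
      have hlen : (s ++ [w]).length ≤ n := by
        have := congrArg List.length hst
        simp only [length_append, length_cons, length_singleton] at this ⊢
        cases t
        · exact absurd rfl ht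
        · simp at this ⊢; omega
      have hxw : x ≠ w := fun h => hx (h ▸ hwc)
      have hs : s ≠ [] := by
        rintro rfl
        rw [hst] at hhead
        simp at hhead
        exact hxw hhead.symm
      have hpre : (s ++ [w]) <+: l := by
        rw [hst]
        refine ⟨t, by simp⟩
      obtain ⟨v, l', hl'', hsub'⟩ := ih (s ++ [w]) w hlen hwc
        ⟨⟨by simp, hnd.sublist hpre.sublist, hch.prefix hpre⟩,
          by rw [hst] at hhead
             cases s
             · exact absurd rfl hs
             · simpa using hhead,
          by simp [getLast?_concat]⟩
      exact ⟨v, l', hl'', fun w' hw' => hpre.sublist.mem (hsub' w' hw')⟩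
    · push_neg at hint
      refine ⟨b, l, ⟨⟨⟨hne, hnd, hch⟩, hhead, hlast⟩, hb, ?_⟩, fun w hw => hw⟩
      intro v hv hvc
      have hvl : v ∈ l.dropLast ++ [l.getLast hne] := by
        rw [dropLast_append_getLast hne]; exact hv
      rw [mem_append] at hvl
      rcases hvl with hv' | hv'
      · exact absurd hvc (hint v hv')
      · have hb' : l.getLast hne = b := by
          rw [getLast?_eq_getLast hne] at hlast
          exact Option.some.injEq _ _ ▸ hlast
        simpa [hb'] using hv'

lemma exists_xtoc (hx : x ∉ c) {b : V} {l : List V} (hb : b ∈ c)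
    (h : IsPathFromTo A l x b) :
    ∃ v l', IsXtoCPath A c l' x v ∧ ∀ w ∈ l', w ∈ l :=
  exists_xtoc_aux hx l.length l b le_rfl hb h

end Infra3
section Count

open List Finset
open scoped Classical

variable (A : V → V → Prop)

/-- Number of arcs between `w` and the pair `x, z`. -/
noncomputable def arcCount (x z w : V) : ℕ :=
  (if A x w then 1 else 0) + (if A w x then 1 else 0) +
    ((if A z w then 1 else 0) + (if A w z then 1 else 0))

variable {A}

lemma arcCount_le_four (x z w : V) : arcCount A x z w ≤ 4 := by
  unfold arcCount; split_ifs <;> omega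

lemma arcCount_le_three {x z w : V} (h : ¬ A x w ∨ ¬ A w x ∨ ¬ A z w ∨ ¬ A w z) :
    arcCount A x z w ≤ 3 := by
  unfold arcCount
  rcases h with h | h | h | h <;> simp [h] <;> split_ifs <;> omega

lemma arcCount_le_two {x z w : V}
    (h1 : ¬ A x w) (h2 : ¬ A w x) : arcCount A x z w ≤ 2 := by
  unfold arcCount; simp [h1, h2]; split_ifs <;> omega

lemma arcCount_pattern {x z w : V} (h : 3 ≤ arcCount A x z w) :
    (A z w ∧ A w x) ∨ (A x w ∧ A w z) := by
  unfold arcCount at h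
  by_cases h1 : A x w <;> by_cases h2 : A w x <;> by_cases h3 : A z w <;>
    by_cases h4 : A w z <;> simp [h1, h2, h3, h4] at h ⊢ <;> omega

lemma deg_eq_sum [Fintype V] (x z : V) :
    deg A x + deg A z = ∑ w : V, arcCount A x z w := by
  have h1 : ∀ y : V, {w | A y w}.ncard = ∑ w : V, (if A y w then 1 else 0) := by
    intro y
    rw [Set.ncard_eq_toFinset_card', Set.toFinset_setOf]
    exact Finset.card_filter _ _
  have h2 : ∀ y : V, {w | A w y}.ncard = ∑ w : V, (if A w y then 1 else 0) := by
    intro y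
    rw [Set.ncard_eq_toFinset_card', Set.toFinset_setOf]
    exact Finset.card_filter _ _
  simp only [deg, outDeg, inDeg, h1, h2, arcCount, ← Finset.sum_add_distrib]

/-- The master counting lemma. -/
lemma count_bound [Fintype V] (hloops : ∀ v, ¬ A v v) {x z : V} (hxz : x ≠ z)
    (hxz1 : ¬ A x z) (hxz2 : ¬ A z x)
    (S : Finset V) (hxS : x ∉ S) (hzS : z ∉ S)
    (hout : ∀ w, w ∉ S → w ≠ x → w ≠ z → arcCount A x z w ≤ 2)
    (hin : ∑ w ∈ S, arcCount A x z w ≤ 2 * S.card + 2) :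
    deg A x + deg A z ≤ 2 * Fintype.card V - 2 := by
  classical
  rw [deg_eq_sum]
  have hSsub : S ⊆ univ := subset_univ S
  rw [← Finset.sum_sdiff hSsub]
  have hpair : ({x, z} : Finset V) ⊆ univ \ S := by
    intro w hw
    simp only [mem_insert, Finset.mem_singleton] at hw
    rcases hw with rfl | rfl <;> simp [hxS, hzS]
  rw [← Finset.sum_sdiff hpair]
  have hFz : arcCount A x z x = 0 := by
    unfold arcCount; simp [hloops x, hxz1, hxz2]
  have hFx : arcCount A x z z = 0 := by
    unfold arcCount; simp [hloops z, hxz1, hxz2]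
  have hpairsum : ∑ w ∈ ({x, z} : Finset V), arcCount A x z w = 0 := by
    rw [Finset.sum_pair hxz, hFz, hFx]
  have hrest : ∑ w ∈ (univ \ S) \ {x, z}, arcCount A x z w ≤
      2 * ((univ \ S) \ {x, z}).card := by
    rw [mul_comm]
    apply Finset.sum_le_card_nsmul
    intro w hw
    simp only [mem_sdiff, mem_insert, Finset.mem_singleton, not_or] at hw
    exact hout w hw.1.2 hw.2.1 hw.2.2
  have hcards : ((univ \ S) \ {x, z}).card = Fintype.card V - S.card - 2 := by
    rw [card_sdiff_of_subset hpair, card_sdiff_of_subset hSsub]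
    simp [Finset.card_pair hxz, Finset.card_univ]
  have hcardS : S.card + 2 ≤ Fintype.card V := by
    have := Finset.card_le_card hpair
    rw [card_sdiff_of_subset hSsub, Finset.card_pair hxz, Finset.card_univ] at this
    have h2 := Finset.card_le_card hSsub
    rw [Finset.card_univ] at h2
    omega
  rw [hcards] at hrest
  omega

end Count
section Routes

open List

variable {A : V → V → Prop} {c : List V} {x : V}

lemma in2 (hx : x ∉ c) {a : V} (ha : a ∈ c) (h : A a x) :
    IsCtoXPath A c ((a :: ([] : List V)) ++ [x]) a x := by
  have hax : a ≠ x := by rintro rfl; exact hx ha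
  apply ctox_intro hx ha
  · intro w hw; simp at hw
  · show ([a, x] : List V).Nodup
    simp [hax]
  · exact isChain_pair.2 h

lemma in3 (hloops : ∀ v, ¬ A v v) (hx : x ∉ c) {a w : V} (ha : a ∈ c) (hw : w ∉ c)
    (h1 : A a w) (h2 : A w x) : IsCtoXPath A c ((a :: [w]) ++ [x]) a x := by
  have hwx : w ≠ x := by rintro rfl; exact hloops _ h2
  have haw : a ≠ w := by rintro rfl; exact hw ha
  have hax : a ≠ x := by rintro rfl; exact hx ha
  apply ctox_intro hx ha
  · intro w' hw'; rw [mem_singleton] at hw'; subst hw'; exact hw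
  · show ([a, w, x] : List V).Nodup
    simp [haw, hax, hwx]
  · show Chain' A [a, w, x]
    exact isChain_cons_cons.2 ⟨h1, isChain_pair.2 h2⟩

lemma out2 (hx : x ∉ c) {b : V} (hb : b ∈ c) (h : A x b) :
    IsXtoCPath A c ((x :: ([] : List V)) ++ [b]) x b := by
  have hax : x ≠ b := by rintro rfl; exact hx hb
  apply xtoc_intro hx hb
  · intro w hw; simp at hw
  · show ([x, b] : List V).Nodup
    simp [hax]
  · exact isChain_pair.2 h

lemma out3 (hloops : ∀ v, ¬ A v v) (hx : x ∉ c) {b w : V} (hb : b ∈ c) (hw : w ∉ c)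
    (h1 : A x w) (h2 : A w b) : IsXtoCPath A c ((x :: [w]) ++ [b]) x b := by
  have hwx : x ≠ w := by rintro rfl; exact hloops _ h1
  have hwb : w ≠ b := by rintro rfl; exact hw hb
  have hxb : x ≠ b := by rintro rfl; exact hx hb
  apply xtoc_intro hx hb
  · intro w' hw'; rw [mem_singleton] at hw'; subst hw'; exact hw
  · show ([x, w, b] : List V).Nodup
    simp [hwx, hxb, hwb]
  · show Chain' A [x, w, b]
    exact isChain_cons_cons.2 ⟨h1, isChain_pair.2 h2⟩

/-- Skip the initial segment of an out-route, entering at `w` directly from `x`. -/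
lemma xtoc_skip (hx : x ∉ c) {v w : V} {s t : List V}
    (hQ : IsXtoCPath A c ((x :: (s ++ w :: t)) ++ [v]) x v) (hxw : A x w) :
    IsXtoCPath A c ((x :: (w :: t)) ++ [v]) x v := by
  obtain ⟨hvc, hmc, hnd, hch, hxm, hvm, hxv⟩ := xtoc_parts hx hQ
  apply xtoc_intro hx hvc
  · intro w' hw'
    rw [mem_cons] at hw'
    apply hmc
    rcases hw' with rfl | hw'
    · exact mem_append_right _ (mem_cons_self)
    · exact mem_append_right _ (mem_cons_of_mem _ hw')
  · have hsuf : ((w :: t) ++ [v]) <:+ ((s ++ w :: t) ++ [v]) := ⟨s, by simp⟩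
    have hsub : ((x :: (w :: t)) ++ [v]) <+ ((x :: (s ++ w :: t)) ++ [v]) := by
      simp only [cons_append]
      exact Sublist.cons₂ x hsuf.sublist
    exact hnd.sublist hsub
  · have hch' : Chain' A ((w :: t) ++ [v]) := hch.suffix ⟨x :: s, by simp⟩
    simp only [cons_append] at hch' ⊢
    exact isChain_cons_cons.2 ⟨hxw, hch'⟩

/-- Truncate an out-route at an internal vertex `w` having an arc to `b ∈ c`. -/
lemma xtoc_exit (hx : x ∉ c) {v w b : V} {s t : List V}
    (hQ : IsXtoCPath A c ((x :: (s ++ w :: t)) ++ [v]) x v)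
    (hb : b ∈ c) (hwb : A w b) :
    IsXtoCPath A c ((x :: (s ++ [w])) ++ [b]) x b := by
  obtain ⟨hvc, hmc, hnd, hch, hxm, hvm, hxv⟩ := xtoc_parts hx hQ
  have hpre : (x :: (s ++ [w])) <+: ((x :: (s ++ w :: t)) ++ [v]) := ⟨t ++ [v], by simp⟩
  have hmem : ∀ w' ∈ s ++ [w], w' ∈ s ++ w :: t := by
    intro w' hw'
    rw [mem_append, mem_singleton] at hw'
    rcases hw' with h | rfl
    · exact mem_append_left _ h
    · exact mem_append_right _ (mem_cons_self)
  apply xtoc_intro hx hb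
  · intro w' hw'
    exact hmc w' (hmem w' hw')
  · rw [nodup_append]
    refine ⟨hnd.sublist hpre.sublist, nodup_singleton b, ?_⟩
    intro a' ha' b' hab hne
    rw [← hne] at hab
    rw [mem_singleton] at hab
    rw [mem_cons] at ha'
    rcases ha' with rfl | ha'
    · exact hx (hab ▸ hb)
    · exact hmc a' (hmem a' ha') (hab ▸ hb)
  · rw [Chain', isChain_append]
    refine ⟨hch.prefix hpre, isChain_singleton b, ?_⟩
    intro p hp q hq
    simp only [head?_cons, Option.mem_def, Option.some.injEq] at hq
    have heq : (x :: (s ++ [w])) = (x :: s) ++ [w] := by simp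
    rw [heq, getLast?_concat] at hp
    simp only [Option.mem_def, Option.some.injEq] at hp
    rw [hp, hq] at hwb
    exact hwb

/-- Enter an in-route at an internal vertex `w` directly from `z ∈ c`. -/
lemma ctox_skip (hx : x ∉ c) {u z w : V} {s t : List V}
    (hP : IsCtoXPath A c ((u :: (s ++ w :: t)) ++ [x]) u x)
    (hz : z ∈ c) (hzw : A z w) :
    IsCtoXPath A c ((z :: (w :: t)) ++ [x]) z x := by
  obtain ⟨huc, hmc, hnd, hch, hxm, hum, hux⟩ := ctox_parts hx hP
  apply ctox_intro hx hz
  · intro w' hw'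
    rw [mem_cons] at hw'
    apply hmc
    rcases hw' with rfl | hw'
    · exact mem_append_right _ (mem_cons_self)
    · exact mem_append_right _ (mem_cons_of_mem _ hw')
  · have hsuf : ((w :: t) ++ [x]) <:+ ((u :: (s ++ w :: t)) ++ [x]) := ⟨u :: s, by simp⟩
    have hnd' : ((w :: t) ++ [x]).Nodup := hnd.sublist hsuf.sublist
    simp only [cons_append, nodup_cons] at hnd' ⊢
    refine ⟨?_, hnd'⟩
    intro hzm
    rw [mem_cons] at hzm
    rcases hzm with rfl | hzm
    · exact hmc z (mem_append_right _ (mem_cons_self)) hz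
    · rw [mem_append, mem_singleton] at hzm
      rcases hzm with hzm | rfl
      · exact hmc z (mem_append_right _ (mem_cons_of_mem _ hzm)) hz
      · exact hx hz
  · have hch' : Chain' A ((w :: t) ++ [x]) := hch.suffix ⟨u :: s, by simp⟩
    simp only [cons_append] at hch' ⊢
    exact isChain_cons_cons.2 ⟨hzw, hch'⟩

/-- Shortcut an in-route from an internal vertex `w` with an arc to `x`. -/
lemma ctox_exit (hx : x ∉ c) {u w : V} {s t : List V}
    (hP : IsCtoXPath A c ((u :: (s ++ w :: t)) ++ [x]) u x) (hwx : A w x) :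
    IsCtoXPath A c ((u :: (s ++ [w])) ++ [x]) u x := by
  obtain ⟨huc, hmc, hnd, hch, hxm, hum, hux⟩ := ctox_parts hx hP
  have hpre : (u :: (s ++ [w])) <+: ((u :: (s ++ w :: t)) ++ [x]) := ⟨t ++ [x], by simp⟩
  have hmem : ∀ w' ∈ s ++ [w], w' ∈ s ++ w :: t := by
    intro w' hw'
    rw [mem_append, mem_singleton] at hw'
    rcases hw' with h | rfl
    · exact mem_append_left _ h
    · exact mem_append_right _ (mem_cons_self)
  apply ctox_intro hx huc
  · intro w' hw'
    exact hmc w' (hmem w' hw')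
  · rw [nodup_append]
    refine ⟨hnd.sublist hpre.sublist, nodup_singleton x, ?_⟩
    intro a' ha' b' hab hne
    rw [← hne] at hab
    rw [mem_singleton] at hab
    rw [mem_cons] at ha'
    rcases ha' with rfl | ha'
    · exact hux hab
    · exact hxm (hab ▸ hmem a' ha')
  · rw [Chain', isChain_append]
    refine ⟨hch.prefix hpre, isChain_singleton x, ?_⟩
    intro p hp q hq
    simp only [head?_cons, Option.mem_def, Option.some.injEq] at hq
    have heq : (u :: (s ++ [w])) = (u :: s) ++ [w] := by simp
    rw [heq, getLast?_concat] at hp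
    simp only [Option.mem_def, Option.some.injEq] at hp
    rw [hp, hq] at hwx
    exact hwx

end Routes
section Struct

open List

variable {A : V → V → Prop} {c : List V} {x u v : V} {mp mq : List V}

/-- Structure forced on a "type 1 heavy" vertex: `z → w → x` with `z ∈ c`, `z ≠ v`. -/
lemma t1_struct (hloops : ∀ v, ¬ A v v) (hx : x ∉ c)
    (hnb : ¬ ∃ p, IsBypass A c p ∧ x ∈ p)
    (hPmin : ∀ (u' : V) (l' : List V), IsCtoXPath A c l' u' x → mp.length + 2 ≤ l'.length)
    (hQ : IsXtoCPath A c ((x :: mq) ++ [v]) x v)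
    (hQmin : ∀ (v' : V) (l' : List V), IsXtoCPath A c l' x v' → mq.length + 2 ≤ l'.length)
    {z w : V} (hz : z ∈ c) (hzv : z ≠ v) (hwc : w ∉ c)
    (hzw : A z w) (hwx : A w x) :
    mp.length ≤ 1 ∧ ∃ s t, mq = s ++ w :: t ∧ (A x w → s = []) ∧
      (∀ b ∈ c, A w b → t = []) := by
  have hR : IsCtoXPath A c ((z :: [w]) ++ [x]) z x := in3 hloops hx hz hwc hzw hwx
  have hmp1 : mp.length ≤ 1 := by
    have := hPmin z _ hR
    simp [length_append] at this
    omega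
  have hwmq : w ∈ mq := by
    obtain ⟨w', hw1, hw2⟩ := route_meet hx hnb hR hQ hzv
    rw [mem_singleton] at hw1
    exact hw1 ▸ hw2
  obtain ⟨s, t, hst⟩ := append_of_mem hwmq
  refine ⟨hmp1, s, t, hst, ?_, ?_⟩
  · intro hxw
    have hQ' : IsXtoCPath A c ((x :: (w :: t)) ++ [v]) x v :=
      xtoc_skip hx (hst ▸ hQ) hxw
    have := hQmin v _ hQ'
    have hlen : mq.length = s.length + 1 + t.length := by
      rw [hst]; simp [length_append]; omega
    simp [length_append] at this
    rw [← length_eq_zero_iff]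
    omega
  · intro b hb hwb
    have hQ' : IsXtoCPath A c ((x :: (s ++ [w])) ++ [b]) x b :=
      xtoc_exit hx (hst ▸ hQ) hb hwb
    have := hQmin b _ hQ'
    have hlen : mq.length = s.length + 1 + t.length := by
      rw [hst]; simp [length_append]; omega
    simp [length_append] at this
    rw [← length_eq_zero_iff]
    omega

/-- Structure forced on a "type 2 heavy" vertex: `x → w → z` with `z ∈ c`, `z ≠ u`. -/
lemma t2_struct (hloops : ∀ v, ¬ A v v) (hx : x ∉ c)
    (hnb : ¬ ∃ p, IsBypass A c p ∧ x ∈ p)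
    (hP : IsCtoXPath A c ((u :: mp) ++ [x]) u x)
    (hPmin : ∀ (u' : V) (l' : List V), IsCtoXPath A c l' u' x → mp.length + 2 ≤ l'.length)
    (hQmin : ∀ (v' : V) (l' : List V), IsXtoCPath A c l' x v' → mq.length + 2 ≤ l'.length)
    {z w : V} (hz : z ∈ c) (hzu : z ≠ u) (hwc : w ∉ c)
    (hxw : A x w) (hwz : A w z) :
    mq.length ≤ 1 ∧ ∃ s t, mp = s ++ w :: t ∧ (A w x → t = []) ∧
      (∀ a ∈ c, A a w → s = []) := by
  have hT : IsXtoCPath A c ((x :: [w]) ++ [z]) x z := out3 hloops hx hz hwc hxw hwz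
  have hmq1 : mq.length ≤ 1 := by
    have := hQmin z _ hT
    simp [length_append] at this
    omega
  have hwmp : w ∈ mp := by
    obtain ⟨w', hw1, hw2⟩ := route_meet hx hnb hP hT (fun h => hzu h.symm)
    rw [mem_singleton] at hw2
    exact hw2 ▸ hw1
  obtain ⟨s, t, hst⟩ := append_of_mem hwmp
  refine ⟨hmq1, s, t, hst, ?_, ?_⟩
  · intro hwx
    have hP' : IsCtoXPath A c ((u :: (s ++ [w])) ++ [x]) u x :=
      ctox_exit hx (hst ▸ hP) hwx
    have := hPmin u _ hP'
    have hlen : mp.length = s.length + 1 + t.length := by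
      rw [hst]; simp [length_append]; omega
    simp [length_append] at this
    rw [← length_eq_zero_iff]
    omega
  · intro a ha haw
    have hP' : IsCtoXPath A c ((a :: (w :: t)) ++ [x]) a x :=
      ctox_skip hx (hst ▸ hP) ha haw
    have := hPmin a _ hP'
    have hlen : mp.length = s.length + 1 + t.length := by
      rw [hst]; simp [length_append]; omega
    simp [length_append] at this
    rw [← length_eq_zero_iff]
    omega

end Struct
section Heavy

open List Finset
open scoped Classical

variable {A : V → V → Prop}

lemma arcCount_pattern' {x z w : V} (h : 3 ≤ arcCount A x z w) :
    (A z w ∧ A w x ∧ (A x w ∨ A w z)) ∨ (A x w ∧ A w z ∧ (A w x ∨ A z w)) := by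
  unfold arcCount at h
  by_cases h1 : A x w <;> by_cases h2 : A w x <;> by_cases h3 : A z w <;>
    by_cases h4 : A w z <;> simp [h1, h2, h3, h4] at h ⊢ <;> omega

lemma arcCount_le_three' {x z w : V} (h : ¬ (A x w ∧ A w x ∧ A z w ∧ A w z)) :
    arcCount A x z w ≤ 3 := by
  unfold arcCount
  by_cases h1 : A x w <;> by_cases h2 : A w x <;> by_cases h3 : A z w <;>
    by_cases h4 : A w z <;> simp [h1, h2, h3, h4] at h ⊢

lemma partII_main [Fintype V] {c : List V} {x u v : V} {mp mq : List V}
    (hloops : ∀ v, ¬ A v v) (hx : x ∉ c)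
    (hnb : ¬ ∃ p, IsBypass A c p ∧ x ∈ p)
    (hnadj : ∀ y ∈ c, ¬ DAdj A x y)
    (hP : IsCtoXPath A c ((u :: mp) ++ [x]) u x)
    (hPmin : ∀ (u' : V) (l' : List V), IsCtoXPath A c l' u' x → mp.length + 2 ≤ l'.length)
    (hQ : IsXtoCPath A c ((x :: mq) ++ [v]) x v)
    (hQmin : ∀ (v' : V) (l' : List V), IsXtoCPath A c l' x v' → mq.length + 2 ≤ l'.length)
    {z : V} (hz : z ∈ c) (hzu : z ≠ u) (hzv : z ≠ v) :
    deg A x + deg A z ≤ 2 * Fintype.card V - 2 := by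
  classical
  have noc : ∀ w ∈ c, ¬ A x w ∧ ¬ A w x := by
    intro w hw
    have h := hnadj w hw
    exact ⟨fun h' => h (Or.inl h'), fun h' => h (Or.inr h')⟩
  have hxz : x ≠ z := fun h => hx (h ▸ hz)
  have hc2 : ∀ w ∈ c, arcCount A x z w ≤ 2 := fun w hw =>
    arcCount_le_two (noc w hw).1 (noc w hw).2
  obtain ⟨huc, hmpc, hndP, hchP, hxmp, hump, hux⟩ := ctox_parts hx hP
  obtain ⟨hvc, hmqc, hndQ, hchQ, hxmq, hvmq, hxv⟩ := xtoc_parts hx hQ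
  have hmpne : mp ≠ [] := by
    rintro rfl
    have : A u x := isChain_pair.1 (by simpa [List.Chain'] using hchP)
    exact hnadj u huc (Or.inr this)
  have hmqne : mq ≠ [] := by
    rintro rfl
    have : A x v := isChain_pair.1 (by simpa [List.Chain'] using hchQ)
    exact hnadj v hvc (Or.inl this)
  by_cases hT1 : ∃ w, w ∉ c ∧ A z w ∧ A w x ∧ (A x w ∨ A w z)
  · by_cases hT2 : ∃ w, w ∉ c ∧ A x w ∧ A w z ∧ (A w x ∨ A z w)
    · -- both heavy types exist: `mp` and `mq` are singletons
      obtain ⟨w1, hw1c, hw1a, hw1b, hw1t⟩ := hT1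
      obtain ⟨w2, hw2c, hw2a, hw2b, hw2t⟩ := hT2
      have hmp1 := (t1_struct hloops hx hnb hPmin hQ hQmin hz hzv hw1c hw1a hw1b).1
      have hmq1 := (t2_struct hloops hx hnb hP hPmin hQmin hz hzu hw2c hw2a hw2b).1
      obtain ⟨p, hp⟩ := length_eq_one_iff.1 (le_antisymm hmp1
        (Nat.one_le_iff_ne_zero.2 (fun h => hmpne (length_eq_zero_iff.1 h))))
      obtain ⟨q, hq⟩ := length_eq_one_iff.1 (le_antisymm hmq1
        (Nat.one_le_iff_ne_zero.2 (fun h => hmqne (length_eq_zero_iff.1 h))))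
      have hpc : p ∉ c := hmpc p (by simp [hp])
      have hqc : q ∉ c := hmqc q (by simp [hq])
      have hpx : p ≠ x := fun h => hxmp (h ▸ (by simp [hp] : p ∈ mp))
      have hqx : q ≠ x := fun h => hxmq (h ▸ (by simp [hq] : q ∈ mq))
      have hpz : p ≠ z := fun h => hpc (h ▸ hz)
      have hqz : q ≠ z := fun h => hqc (h ▸ hz)
      have houtc : ∀ w, w ∉ ({p, q} : Finset V) → w ≠ x → w ≠ z →
          arcCount A x z w ≤ 2 := by
        intro w hS hwx hwz
        by_cases hwC : w ∈ c
        · exact hc2 w hwC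
        by_contra hcon
        have h3 : 3 ≤ arcCount A x z w := by omega
        rcases arcCount_pattern' h3 with ⟨ha, hb, _⟩ | ⟨ha, hb, _⟩
        · obtain ⟨_, s, t, hdec, _, _⟩ :=
            t1_struct hloops hx hnb hPmin hQ hQmin hz hzv hwC ha hb
          have : w ∈ mq := hdec ▸ mem_append_right _ (mem_cons_self)
          rw [hq, List.mem_singleton] at this
          exact hS (by simp [this])
        · obtain ⟨_, s, t, hdec, _, _⟩ :=
            t2_struct hloops hx hnb hP hPmin hQmin hz hzu hwC ha hb
          have : w ∈ mp := hdec ▸ mem_append_right _ (mem_cons_self)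
          rw [hp, List.mem_singleton] at this
          exact hS (by simp [this])
      by_cases hpq : p = q
      · refine count_bound hloops hxz (noc z hz).1 (noc z hz).2 {p}
          (by simp [Ne.symm hpx]) (by simp [Ne.symm hpz]) ?_ ?_
        · intro w hS hwx hwz
          refine houtc w ?_ hwx hwz
          simp only [Finset.mem_insert, Finset.mem_singleton] at hS ⊢
          rw [← hpq]
          tauto
        · rw [Finset.sum_singleton, Finset.card_singleton]
          exact le_trans (arcCount_le_four x z p) (by omega)
      · refine count_bound hloops hxz (noc z hz).1 (noc z hz).2 {p, q}
          (by simp [Ne.symm hpx, Ne.symm hqx]) (by simp [Ne.symm hpz, Ne.symm hqz]) houtc ?_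
        rw [Finset.sum_pair hpq, Finset.card_pair hpq]
        have h1 : arcCount A x z p ≤ 3 := by
          apply arcCount_le_three'
          rintro ⟨ha1, ha2, ha3, ha4⟩
          obtain ⟨_, s, t, hdec, _, _⟩ :=
            t1_struct hloops hx hnb hPmin hQ hQmin hz hzv hpc ha3 ha2
          have : p ∈ mq := hdec ▸ mem_append_right _ (mem_cons_self)
          rw [hq, List.mem_singleton] at this
          exact hpq this
        have h2 : arcCount A x z q ≤ 3 := by
          apply arcCount_le_three'
          rintro ⟨ha1, ha2, ha3, ha4⟩
          obtain ⟨_, s, t, hdec, _, _⟩ :=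
            t2_struct hloops hx hnb hP hPmin hQmin hz hzu hqc ha1 ha4
          have : q ∈ mp := hdec ▸ mem_append_right _ (mem_cons_self)
          rw [hp, List.mem_singleton] at this
          exact hpq this.symm
        omega
    · -- only type 1 heavies: all heavies are at the ends of `mq`
      obtain ⟨q1, tq, hq1⟩ : ∃ a t, mq = a :: t := by
        rcases mq with _ | ⟨a, t⟩
        · exact absurd rfl hmqne
        · exact ⟨a, t, rfl⟩
      obtain ⟨sq, qt, hqt⟩ : ∃ s a, mq = s ++ [a] := by
        rcases eq_nil_or_concat mq with h | ⟨s, a, h⟩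
        · exact absurd h hmqne
        · exact ⟨s, a, by simpa [List.concat_eq_append] using h⟩
      have hq1m : q1 ∈ mq := by simp [hq1]
      have hqtm : qt ∈ mq := by simp [hqt]
      have hq1c : q1 ∉ c := hmqc _ hq1m
      have hqtc : qt ∉ c := hmqc _ hqtm
      have hq1x : q1 ≠ x := fun h => hxmq (h ▸ hq1m)
      have hqtx : qt ≠ x := fun h => hxmq (h ▸ hqtm)
      have hq1z : q1 ≠ z := fun h => hq1c (h ▸ hz)
      have hqtz : qt ≠ z := fun h => hqtc (h ▸ hz)
      have houtc : ∀ w, w ∉ ({q1, qt} : Finset V) → w ≠ x → w ≠ z →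
          arcCount A x z w ≤ 2 := by
        intro w hS hwx hwz
        by_cases hwC : w ∈ c
        · exact hc2 w hwC
        by_contra hcon
        have h3 : 3 ≤ arcCount A x z w := by omega
        rcases arcCount_pattern' h3 with ⟨ha, hb, hthird⟩ | ⟨ha, hb, hthird⟩
        · obtain ⟨_, s, t, hdec, hskip, hexit⟩ :=
            t1_struct hloops hx hnb hPmin hQ hQmin hz hzv hwC ha hb
          rcases hthird with hxw | hwz'
          · have hs : s = [] := hskip hxw
            rw [hs, nil_append, hq1] at hdec
            have : w = q1 := (List.cons_eq_cons.1 hdec.symm).1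
            exact hS (by simp [this])
          · have ht : t = [] := hexit z hz hwz'
            rw [ht] at hdec
            have heq2 : (sq ++ [qt]).getLast? = (s ++ [w]).getLast? := by
              rw [← hqt, ← hdec]
            simp only [getLast?_concat, Option.some.injEq] at heq2
            exact hS (by simp [heq2])
        · exact hT2 ⟨w, hwC, ha, hb, hthird⟩
      by_cases hq1qt : q1 = qt
      · refine count_bound hloops hxz (noc z hz).1 (noc z hz).2 {q1}
          (by simp [Ne.symm hq1x]) (by simp [Ne.symm hq1z]) ?_ ?_
        · intro w hS hwx hwz
          refine houtc w ?_ hwx hwz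
          simp only [Finset.mem_insert, Finset.mem_singleton] at hS ⊢
          rw [← hq1qt]
          tauto
        · rw [Finset.sum_singleton, Finset.card_singleton]
          exact le_trans (arcCount_le_four x z q1) (by omega)
      · refine count_bound hloops hxz (noc z hz).1 (noc z hz).2 {q1, qt}
          (by simp [Ne.symm hq1x, Ne.symm hqtx])
          (by simp [Ne.symm hq1z, Ne.symm hqtz]) houtc ?_
        rw [Finset.sum_pair hq1qt, Finset.card_pair hq1qt]
        have h1 : arcCount A x z q1 ≤ 3 := by
          apply arcCount_le_three'
          rintro ⟨ha1, ha2, ha3, ha4⟩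
          exact hT2 ⟨q1, hq1c, ha1, ha4, Or.inl ha2⟩
        have h2 : arcCount A x z qt ≤ 3 := by
          apply arcCount_le_three'
          rintro ⟨ha1, ha2, ha3, ha4⟩
          exact hT2 ⟨qt, hqtc, ha1, ha4, Or.inl ha2⟩
        omega
  · by_cases hT2 : ∃ w, w ∉ c ∧ A x w ∧ A w z ∧ (A w x ∨ A z w)
    · -- only type 2 heavies: all heavies are at the ends of `mp`
      obtain ⟨p1, tp, hp1⟩ : ∃ a t, mp = a :: t := by
        rcases mp with _ | ⟨a, t⟩
        · exact absurd rfl hmpne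
        · exact ⟨a, t, rfl⟩
      obtain ⟨sp, pt, hpt⟩ : ∃ s a, mp = s ++ [a] := by
        rcases eq_nil_or_concat mp with h | ⟨s, a, h⟩
        · exact absurd h hmpne
        · exact ⟨s, a, by simpa [List.concat_eq_append] using h⟩
      have hp1m : p1 ∈ mp := by simp [hp1]
      have hptm : pt ∈ mp := by simp [hpt]
      have hp1c : p1 ∉ c := hmpc _ hp1m
      have hptc : pt ∉ c := hmpc _ hptm
      have hp1x : p1 ≠ x := fun h => hxmp (h ▸ hp1m)
      have hptx : pt ≠ x := fun h => hxmp (h ▸ hptm)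
      have hp1z : p1 ≠ z := fun h => hp1c (h ▸ hz)
      have hptz : pt ≠ z := fun h => hptc (h ▸ hz)
      have houtc : ∀ w, w ∉ ({p1, pt} : Finset V) → w ≠ x → w ≠ z →
          arcCount A x z w ≤ 2 := by
        intro w hS hwx hwz
        by_cases hwC : w ∈ c
        · exact hc2 w hwC
        by_contra hcon
        have h3 : 3 ≤ arcCount A x z w := by omega
        rcases arcCount_pattern' h3 with ⟨ha, hb, hthird⟩ | ⟨ha, hb, hthird⟩
        · exact hT1 ⟨w, hwC, ha, hb, hthird⟩
        · obtain ⟨_, s, t, hdec, hskip, hexit⟩ :=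
            t2_struct hloops hx hnb hP hPmin hQmin hz hzu hwC ha hb
          rcases hthird with hwx' | hzw'
          · have ht : t = [] := hskip hwx'
            rw [ht] at hdec
            have heq2 : (sp ++ [pt]).getLast? = (s ++ [w]).getLast? := by
              rw [← hpt, ← hdec]
            simp only [getLast?_concat, Option.some.injEq] at heq2
            exact hS (by simp [heq2])
          · have hs : s = [] := hexit z hz hzw'
            rw [hs, nil_append, hp1] at hdec
            have : w = p1 := (List.cons_eq_cons.1 hdec.symm).1
            exact hS (by simp [this])
      by_cases hp1pt : p1 = pt
      · refine count_bound hloops hxz (noc z hz).1 (noc z hz).2 {p1}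
          (by simp [Ne.symm hp1x]) (by simp [Ne.symm hp1z]) ?_ ?_
        · intro w hS hwx hwz
          refine houtc w ?_ hwx hwz
          simp only [Finset.mem_insert, Finset.mem_singleton] at hS ⊢
          rw [← hp1pt]
          tauto
        · rw [Finset.sum_singleton, Finset.card_singleton]
          exact le_trans (arcCount_le_four x z p1) (by omega)
      · refine count_bound hloops hxz (noc z hz).1 (noc z hz).2 {p1, pt}
          (by simp [Ne.symm hp1x, Ne.symm hptx])
          (by simp [Ne.symm hp1z, Ne.symm hptz]) houtc ?_
        rw [Finset.sum_pair hp1pt, Finset.card_pair hp1pt]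
        have h1 : arcCount A x z p1 ≤ 3 := by
          apply arcCount_le_three'
          rintro ⟨ha1, ha2, ha3, ha4⟩
          exact hT1 ⟨p1, hp1c, ha3, ha2, Or.inl ha1⟩
        have h2 : arcCount A x z pt ≤ 3 := by
          apply arcCount_le_three'
          rintro ⟨ha1, ha2, ha3, ha4⟩
          exact hT1 ⟨pt, hptc, ha3, ha2, Or.inl ha1⟩
        omega
    · -- no heavies at all
      refine count_bound hloops hxz (noc z hz).1 (noc z hz).2 ∅
        (by simp) (by simp) ?_ (by simp)
      intro w hS hwx hwz
      by_cases hwC : w ∈ c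
      · exact hc2 w hwC
      by_contra hcon
      have h3 : 3 ≤ arcCount A x z w := by omega
      rcases arcCount_pattern' h3 with ⟨ha, hb, hthird⟩ | ⟨ha, hb, hthird⟩
      · exact hT1 ⟨w, hwC, ha, hb, hthird⟩
      · exact hT2 ⟨w, hwC, ha, hb, hthird⟩

end Heavy
section Exc

open List Finset
open scoped Classical

variable {A : V → V → Prop}

/-- Degree bound when there is no "type 2 heavy" vertex for `z` (needs only `z ≠ v`). -/
lemma bound_noT2 [Fintype V] {c : List V} {x u v : V} {mp mq : List V}
    (hloops : ∀ v, ¬ A v v) (hx : x ∉ c)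
    (hnb : ¬ ∃ p, IsBypass A c p ∧ x ∈ p)
    (hnadj : ∀ y ∈ c, ¬ DAdj A x y)
    (hP : IsCtoXPath A c ((u :: mp) ++ [x]) u x)
    (hPmin : ∀ (u' : V) (l' : List V), IsCtoXPath A c l' u' x → mp.length + 2 ≤ l'.length)
    (hQ : IsXtoCPath A c ((x :: mq) ++ [v]) x v)
    (hQmin : ∀ (v' : V) (l' : List V), IsXtoCPath A c l' x v' → mq.length + 2 ≤ l'.length)
    {z : V} (hz : z ∈ c) (hzv : z ≠ v)
    (hT2 : ¬ ∃ w, w ∉ c ∧ A x w ∧ A w z ∧ (A w x ∨ A z w)) :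
    deg A x + deg A z ≤ 2 * Fintype.card V - 2 := by
  classical
  have noc : ∀ w ∈ c, ¬ A x w ∧ ¬ A w x := by
    intro w hw
    have h := hnadj w hw
    exact ⟨fun h' => h (Or.inl h'), fun h' => h (Or.inr h')⟩
  have hxz : x ≠ z := fun h => hx (h ▸ hz)
  have hc2 : ∀ w ∈ c, arcCount A x z w ≤ 2 := fun w hw =>
    arcCount_le_two (noc w hw).1 (noc w hw).2
  obtain ⟨hvc, hmqc, hndQ, hchQ, hxmq, hvmq, hxv⟩ := xtoc_parts hx hQ
  have hmqne : mq ≠ [] := by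
    rintro rfl
    have : A x v := isChain_pair.1 (by simpa [List.Chain'] using hchQ)
    exact hnadj v hvc (Or.inl this)
  by_cases hT1 : ∃ w, w ∉ c ∧ A z w ∧ A w x ∧ (A x w ∨ A w z)
  · obtain ⟨q1, tq, hq1⟩ : ∃ a t, mq = a :: t := by
      rcases mq with _ | ⟨a, t⟩
      · exact absurd rfl hmqne
      · exact ⟨a, t, rfl⟩
    obtain ⟨sq, qt, hqt⟩ : ∃ s a, mq = s ++ [a] := by
      rcases eq_nil_or_concat mq with h | ⟨s, a, h⟩
      · exact absurd h hmqne
      · exact ⟨s, a, by simpa [List.concat_eq_append] using h⟩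
    have hq1m : q1 ∈ mq := by simp [hq1]
    have hqtm : qt ∈ mq := by simp [hqt]
    have hq1c : q1 ∉ c := hmqc _ hq1m
    have hqtc : qt ∉ c := hmqc _ hqtm
    have hq1x : q1 ≠ x := fun h => hxmq (h ▸ hq1m)
    have hqtx : qt ≠ x := fun h => hxmq (h ▸ hqtm)
    have hq1z : q1 ≠ z := fun h => hq1c (h ▸ hz)
    have hqtz : qt ≠ z := fun h => hqtc (h ▸ hz)
    have houtc : ∀ w, w ∉ ({q1, qt} : Finset V) → w ≠ x → w ≠ z →
        arcCount A x z w ≤ 2 := by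
      intro w hS hwx hwz
      by_cases hwC : w ∈ c
      · exact hc2 w hwC
      by_contra hcon
      have h3 : 3 ≤ arcCount A x z w := by omega
      rcases arcCount_pattern' h3 with ⟨ha, hb, hthird⟩ | ⟨ha, hb, hthird⟩
      · obtain ⟨_, s, t, hdec, hskip, hexit⟩ :=
          t1_struct hloops hx hnb hPmin hQ hQmin hz hzv hwC ha hb
        rcases hthird with hxw | hwz'
        · have hs : s = [] := hskip hxw
          rw [hs, nil_append, hq1] at hdec
          have : w = q1 := (List.cons_eq_cons.1 hdec.symm).1
          exact hS (by simp [this])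
        · have ht : t = [] := hexit z hz hwz'
          rw [ht] at hdec
          have heq2 : (sq ++ [qt]).getLast? = (s ++ [w]).getLast? := by
            rw [← hqt, ← hdec]
          simp only [getLast?_concat, Option.some.injEq] at heq2
          exact hS (by simp [heq2])
      · exact hT2 ⟨w, hwC, ha, hb, hthird⟩
    by_cases hq1qt : q1 = qt
    · refine count_bound hloops hxz (noc z hz).1 (noc z hz).2 {q1}
        (by simp [Ne.symm hq1x]) (by simp [Ne.symm hq1z]) ?_ ?_
      · intro w hS hwx hwz
        refine houtc w ?_ hwx hwz
        simp only [Finset.mem_insert, Finset.mem_singleton] at hS ⊢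
        rw [← hq1qt]
        tauto
      · rw [Finset.sum_singleton, Finset.card_singleton]
        exact le_trans (arcCount_le_four x z q1) (by omega)
    · refine count_bound hloops hxz (noc z hz).1 (noc z hz).2 {q1, qt}
        (by simp [Ne.symm hq1x, Ne.symm hqtx])
        (by simp [Ne.symm hq1z, Ne.symm hqtz]) houtc ?_
      rw [Finset.sum_pair hq1qt, Finset.card_pair hq1qt]
      have h1 : arcCount A x z q1 ≤ 3 := by
        apply arcCount_le_three'
        rintro ⟨ha1, ha2, ha3, ha4⟩
        exact hT2 ⟨q1, hq1c, ha1, ha4, Or.inl ha2⟩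
      have h2 : arcCount A x z qt ≤ 3 := by
        apply arcCount_le_three'
        rintro ⟨ha1, ha2, ha3, ha4⟩
        exact hT2 ⟨qt, hqtc, ha1, ha4, Or.inl ha2⟩
      omega
  · refine count_bound hloops hxz (noc z hz).1 (noc z hz).2 ∅
      (by simp) (by simp) ?_ (by simp)
    intro w hS hwx hwz
    by_cases hwC : w ∈ c
    · exact hc2 w hwC
    by_contra hcon
    have h3 : 3 ≤ arcCount A x z w := by omega
    rcases arcCount_pattern' h3 with ⟨ha, hb, hthird⟩ | ⟨ha, hb, hthird⟩
    · exact hT1 ⟨w, hwC, ha, hb, hthird⟩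
    · exact hT2 ⟨w, hwC, ha, hb, hthird⟩

/-- Degree bound when there is no "type 1 heavy" vertex for `z` (needs only `z ≠ u`). -/
lemma bound_noT1 [Fintype V] {c : List V} {x u v : V} {mp mq : List V}
    (hloops : ∀ v, ¬ A v v) (hx : x ∉ c)
    (hnb : ¬ ∃ p, IsBypass A c p ∧ x ∈ p)
    (hnadj : ∀ y ∈ c, ¬ DAdj A x y)
    (hP : IsCtoXPath A c ((u :: mp) ++ [x]) u x)
    (hPmin : ∀ (u' : V) (l' : List V), IsCtoXPath A c l' u' x → mp.length + 2 ≤ l'.length)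
    (hQ : IsXtoCPath A c ((x :: mq) ++ [v]) x v)
    (hQmin : ∀ (v' : V) (l' : List V), IsXtoCPath A c l' x v' → mq.length + 2 ≤ l'.length)
    {z : V} (hz : z ∈ c) (hzu : z ≠ u)
    (hT1 : ¬ ∃ w, w ∉ c ∧ A z w ∧ A w x ∧ (A x w ∨ A w z)) :
    deg A x + deg A z ≤ 2 * Fintype.card V - 2 := by
  classical
  have noc : ∀ w ∈ c, ¬ A x w ∧ ¬ A w x := by
    intro w hw
    have h := hnadj w hw
    exact ⟨fun h' => h (Or.inl h'), fun h' => h (Or.inr h')⟩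
  have hxz : x ≠ z := fun h => hx (h ▸ hz)
  have hc2 : ∀ w ∈ c, arcCount A x z w ≤ 2 := fun w hw =>
    arcCount_le_two (noc w hw).1 (noc w hw).2
  obtain ⟨huc, hmpc, hndP, hchP, hxmp, hump, hux⟩ := ctox_parts hx hP
  have hmpne : mp ≠ [] := by
    rintro rfl
    have : A u x := isChain_pair.1 (by simpa [List.Chain'] using hchP)
    exact hnadj u huc (Or.inr this)
  by_cases hT2 : ∃ w, w ∉ c ∧ A x w ∧ A w z ∧ (A w x ∨ A z w)
  · obtain ⟨p1, tp, hp1⟩ : ∃ a t, mp = a :: t := by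
      rcases mp with _ | ⟨a, t⟩
      · exact absurd rfl hmpne
      · exact ⟨a, t, rfl⟩
    obtain ⟨sp, pt, hpt⟩ : ∃ s a, mp = s ++ [a] := by
      rcases eq_nil_or_concat mp with h | ⟨s, a, h⟩
      · exact absurd h hmpne
      · exact ⟨s, a, by simpa [List.concat_eq_append] using h⟩
    have hp1m : p1 ∈ mp := by simp [hp1]
    have hptm : pt ∈ mp := by simp [hpt]
    have hp1c : p1 ∉ c := hmpc _ hp1m
    have hptc : pt ∉ c := hmpc _ hptm
    have hp1x : p1 ≠ x := fun h => hxmp (h ▸ hp1m)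
    have hptx : pt ≠ x := fun h => hxmp (h ▸ hptm)
    have hp1z : p1 ≠ z := fun h => hp1c (h ▸ hz)
    have hptz : pt ≠ z := fun h => hptc (h ▸ hz)
    have houtc : ∀ w, w ∉ ({p1, pt} : Finset V) → w ≠ x → w ≠ z →
        arcCount A x z w ≤ 2 := by
      intro w hS hwx hwz
      by_cases hwC : w ∈ c
      · exact hc2 w hwC
      by_contra hcon
      have h3 : 3 ≤ arcCount A x z w := by omega
      rcases arcCount_pattern' h3 with ⟨ha, hb, hthird⟩ | ⟨ha, hb, hthird⟩
      · exact hT1 ⟨w, hwC, ha, hb, hthird⟩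
      · obtain ⟨_, s, t, hdec, hskip, hexit⟩ :=
          t2_struct hloops hx hnb hP hPmin hQmin hz hzu hwC ha hb
        rcases hthird with hwx' | hzw'
        · have ht : t = [] := hskip hwx'
          rw [ht] at hdec
          have heq2 : (sp ++ [pt]).getLast? = (s ++ [w]).getLast? := by
            rw [← hpt, ← hdec]
          simp only [getLast?_concat, Option.some.injEq] at heq2
          exact hS (by simp [heq2])
        · have hs : s = [] := hexit z hz hzw'
          rw [hs, nil_append, hp1] at hdec
          have : w = p1 := (List.cons_eq_cons.1 hdec.symm).1
          exact hS (by simp [this])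
    by_cases hp1pt : p1 = pt
    · refine count_bound hloops hxz (noc z hz).1 (noc z hz).2 {p1}
        (by simp [Ne.symm hp1x]) (by simp [Ne.symm hp1z]) ?_ ?_
      · intro w hS hwx hwz
        refine houtc w ?_ hwx hwz
        simp only [Finset.mem_insert, Finset.mem_singleton] at hS ⊢
        rw [← hp1pt]
        tauto
      · rw [Finset.sum_singleton, Finset.card_singleton]
        exact le_trans (arcCount_le_four x z p1) (by omega)
    · refine count_bound hloops hxz (noc z hz).1 (noc z hz).2 {p1, pt}
        (by simp [Ne.symm hp1x, Ne.symm hptx])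
        (by simp [Ne.symm hp1z, Ne.symm hptz]) houtc ?_
      rw [Finset.sum_pair hp1pt, Finset.card_pair hp1pt]
      have h1 : arcCount A x z p1 ≤ 3 := by
        apply arcCount_le_three'
        rintro ⟨ha1, ha2, ha3, ha4⟩
        exact hT1 ⟨p1, hp1c, ha3, ha2, Or.inl ha1⟩
      have h2 : arcCount A x z pt ≤ 3 := by
        apply arcCount_le_three'
        rintro ⟨ha1, ha2, ha3, ha4⟩
        exact hT1 ⟨pt, hptc, ha3, ha2, Or.inl ha1⟩
      omega
  · refine count_bound hloops hxz (noc z hz).1 (noc z hz).2 ∅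
      (by simp) (by simp) ?_ (by simp)
    intro w hS hwx hwz
    by_cases hwC : w ∈ c
    · exact hc2 w hwC
    by_contra hcon
    have h3 : 3 ≤ arcCount A x z w := by omega
    rcases arcCount_pattern' h3 with ⟨ha, hb, hthird⟩ | ⟨ha, hb, hthird⟩
    · exact hT1 ⟨w, hwC, ha, hb, hthird⟩
    · exact hT2 ⟨w, hwC, ha, hb, hthird⟩

end Exc
section Exc2

open List Finset
open scoped Classical

variable {A : V → V → Prop}

/-- When both obstruction types exist (`u ≠ v`), the bound still holds at `u`. -/
lemma bound_u_GH [Fintype V] {c : List V} {x u v : V} {mp mq : List V}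
    (hloops : ∀ v, ¬ A v v) (hx : x ∉ c)
    (hnb : ¬ ∃ p, IsBypass A c p ∧ x ∈ p)
    (hnadj : ∀ y ∈ c, ¬ DAdj A x y)
    (hP : IsCtoXPath A c ((u :: mp) ++ [x]) u x)
    (hPmin : ∀ (u' : V) (l' : List V), IsCtoXPath A c l' u' x → mp.length + 2 ≤ l'.length)
    (hQ : IsXtoCPath A c ((x :: mq) ++ [v]) x v)
    (hQmin : ∀ (v' : V) (l' : List V), IsXtoCPath A c l' x v' → mq.length + 2 ≤ l'.length)
    (huv : u ≠ v)
    (hG : ∃ w, w ∉ c ∧ A x w ∧ A w u ∧ (A w x ∨ A u w))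
    (hH : ∃ w, w ∉ c ∧ A v w ∧ A w x ∧ (A x w ∨ A w v)) :
    deg A x + deg A u ≤ 2 * Fintype.card V - 2 := by
  classical
  have noc : ∀ w ∈ c, ¬ A x w ∧ ¬ A w x := by
    intro w hw
    have h := hnadj w hw
    exact ⟨fun h' => h (Or.inl h'), fun h' => h (Or.inr h')⟩
  obtain ⟨huc, hmpc, hndP, hchP, hxmp, hump, hux⟩ := ctox_parts hx hP
  obtain ⟨hvc, hmqc, hndQ, hchQ, hxmq, hvmq, hxv⟩ := xtoc_parts hx hQ
  have hxu : x ≠ u := Ne.symm hux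
  have hc2 : ∀ w ∈ c, arcCount A x u w ≤ 2 := fun w hw =>
    arcCount_le_two (noc w hw).1 (noc w hw).2
  have hmqne : mq ≠ [] := by
    rintro rfl
    have : A x v := isChain_pair.1 (by simpa [List.Chain'] using hchQ)
    exact hnadj v hvc (Or.inl this)
  obtain ⟨m, hmc, hma, hmb, hmt⟩ := hH
  obtain ⟨w0, hw0c, hw0a, hw0b, hw0t⟩ := hG
  have hmq1 : mq.length ≤ 1 := by
    have := hQmin u _ (out3 hloops hx huc hw0c hw0a hw0b)
    simp [length_append] at this
    omega
  obtain ⟨q, hq⟩ := length_eq_one_iff.1 (le_antisymm hmq1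
    (Nat.one_le_iff_ne_zero.2 (fun h => hmqne (length_eq_zero_iff.1 h))))
  -- pairing: any type-2 heavy for u coincides with m
  have hpair : ∀ w, w ∉ c → A x w → A w u → w = m := by
    intro w hwc hxw hwu
    have hR : IsCtoXPath A c ((v :: [m]) ++ [x]) v x := in3 hloops hx hvc hmc hma hmb
    have hT : IsXtoCPath A c ((x :: [w]) ++ [u]) x u := out3 hloops hx huc hwc hxw hwu
    obtain ⟨w', h1, h2⟩ := route_meet hx hnb hR hT (fun h => huv h.symm)
    rw [List.mem_singleton] at h1 h2
    rw [← h2, h1]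
  -- any type-1 heavy for u lies in mq = [q]
  have ht1q : ∀ w, w ∉ c → A u w → A w x → w = q := by
    intro w hwc huw hwx
    obtain ⟨_, s, t, hdec, _, _⟩ :=
      t1_struct hloops hx hnb hPmin hQ hQmin huc huv hwc huw hwx
    have : w ∈ mq := hdec ▸ mem_append_right _ (mem_cons_self)
    rw [hq, List.mem_singleton] at this
    exact this
  have hqm : q ∈ mq := by simp [hq]
  have hqc : q ∉ c := hmqc _ hqm
  have hqx : q ≠ x := fun h => hxmq (h ▸ hqm)
  have hqu : q ≠ u := fun h => hqc (h ▸ huc)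
  have hmx : m ≠ x := fun h => hloops x (h ▸ hmb)
  have hmu : m ≠ u := fun h => hmc (h ▸ huc)
  have houtc : ∀ w, w ∉ ({q, m} : Finset V) → w ≠ x → w ≠ u →
      arcCount A x u w ≤ 2 := by
    intro w hS hwx hwu
    by_cases hwC : w ∈ c
    · exact hc2 w hwC
    by_contra hcon
    have h3 : 3 ≤ arcCount A x u w := by omega
    rcases arcCount_pattern' h3 with ⟨ha, hb, _⟩ | ⟨ha, hb, _⟩
    · exact hS (by simp [ht1q w hwC ha hb])
    · exact hS (by simp [hpair w hwC ha hb])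
  by_cases hqm' : q = m
  · refine count_bound hloops hxu (noc u huc).1 (noc u huc).2 {q}
      (by simp [Ne.symm hqx]) (by simp [Ne.symm hqu]) ?_ ?_
    · intro w hS hwx hwu
      refine houtc w ?_ hwx hwu
      simp only [Finset.mem_insert, Finset.mem_singleton] at hS ⊢
      rw [← hqm']
      tauto
    · rw [Finset.sum_singleton, Finset.card_singleton]
      exact le_trans (arcCount_le_four x u q) (by omega)
  · refine count_bound hloops hxu (noc u huc).1 (noc u huc).2 {q, m}
      (by simp [Ne.symm hqx, Ne.symm hmx]) (by simp [Ne.symm hqu, Ne.symm hmu]) houtc ?_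
    rw [Finset.sum_pair hqm', Finset.card_pair hqm']
    have h1 : arcCount A x u q ≤ 3 := by
      apply arcCount_le_three'
      rintro ⟨ha1, ha2, ha3, ha4⟩
      exact hqm' (hpair q hqc ha1 ha4)
    have h2 : arcCount A x u m ≤ 3 := by
      apply arcCount_le_three'
      rintro ⟨ha1, ha2, ha3, ha4⟩
      exact hqm' (ht1q m hmc ha3 ha2).symm
    omega

/-- The exceptional-vertex disjunction for `u ≠ v`. -/
lemma partII_exc [Fintype V] {c : List V} {x u v : V} {mp mq : List V}
    (hloops : ∀ v, ¬ A v v) (hx : x ∉ c)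
    (hnb : ¬ ∃ p, IsBypass A c p ∧ x ∈ p)
    (hnadj : ∀ y ∈ c, ¬ DAdj A x y)
    (hP : IsCtoXPath A c ((u :: mp) ++ [x]) u x)
    (hPmin : ∀ (u' : V) (l' : List V), IsCtoXPath A c l' u' x → mp.length + 2 ≤ l'.length)
    (hQ : IsXtoCPath A c ((x :: mq) ++ [v]) x v)
    (hQmin : ∀ (v' : V) (l' : List V), IsXtoCPath A c l' x v' → mq.length + 2 ≤ l'.length)
    (huv : u ≠ v) :
    deg A x + deg A u ≤ 2 * Fintype.card V - 2 ∨
      deg A x + deg A v ≤ 2 * Fintype.card V - 2 := by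
  classical
  obtain ⟨huc, _, _, _, _, _, _⟩ := ctox_parts hx hP
  obtain ⟨hvc, _, _, _, _, _, _⟩ := xtoc_parts hx hQ
  by_cases hG : ∃ w, w ∉ c ∧ A x w ∧ A w u ∧ (A w x ∨ A u w)
  · by_cases hH : ∃ w, w ∉ c ∧ A v w ∧ A w x ∧ (A x w ∨ A w v)
    · exact Or.inl (bound_u_GH hloops hx hnb hnadj hP hPmin hQ hQmin huv hG hH)
    · exact Or.inr (bound_noT1 hloops hx hnb hnadj hP hPmin hQ hQmin hvc
        (Ne.symm huv) hH)
  · exact Or.inl (bound_noT2 hloops hx hnb hnadj hP hPmin hQ hQmin huc huv hG)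

end Exc2
section PartI

open List
open scoped Classical

variable {A : V → V → Prop} {c : List V} {x : V}

/-- Existence of a minimal in-route. -/
lemma exists_min_ctox (hx : x ∉ c)
    (hto : ∃ u ∈ c, ∃ l, IsPathFromTo A l u x) :
    ∃ u mp, IsCtoXPath A c ((u :: mp) ++ [x]) u x ∧
      ∀ (u' : V) (l' : List V), IsCtoXPath A c l' u' x → mp.length + 2 ≤ l'.length := by
  classical
  obtain ⟨u0, hu0, l0, hl0⟩ := hto
  obtain ⟨u1, l1, hl1, _⟩ := exists_ctox hx hu0 hl0
  have hne : ∃ n, ∃ u l, IsCtoXPath A c l u x ∧ l.length = n := ⟨l1.length, u1, l1, hl1, rfl⟩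
  obtain ⟨u, l, hl, hlen⟩ := Nat.find_spec hne
  obtain ⟨m, hm, _, _, _, _, _, _, _⟩ := ctox_elim hx hl
  refine ⟨u, m, hm ▸ hl, ?_⟩
  intro u' l' hl'
  have h1 : Nat.find hne ≤ l'.length := Nat.find_min' hne ⟨u', l', hl', rfl⟩
  have h2 : ((u :: m) ++ [x]).length = Nat.find hne := by rw [← hm, hlen]
  simp only [length_append, length_cons, length_singleton] at h2
  omega

/-- Existence of a minimal out-route. -/
lemma exists_min_xtoc (hx : x ∉ c)
    (hfrom : ∃ v ∈ c, ∃ l, IsPathFromTo A l x v) :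
    ∃ v mq, IsXtoCPath A c ((x :: mq) ++ [v]) x v ∧
      ∀ (v' : V) (l' : List V), IsXtoCPath A c l' x v' → mq.length + 2 ≤ l'.length := by
  classical
  obtain ⟨v0, hv0, l0, hl0⟩ := hfrom
  obtain ⟨v1, l1, hl1, _⟩ := exists_xtoc hx hv0 hl0
  have hne : ∃ n, ∃ v l, IsXtoCPath A c l x v ∧ l.length = n := ⟨l1.length, v1, l1, hl1, rfl⟩
  obtain ⟨v, l, hl, hlen⟩ := Nat.find_spec hne
  obtain ⟨m, hm, _, _, _, _, _, _, _⟩ := xtoc_elim hx hl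
  refine ⟨v, m, hm ▸ hl, ?_⟩
  intro v' l' hl'
  have h1 : Nat.find hne ≤ l'.length := Nat.find_min' hne ⟨v', l', hl', rfl⟩
  have h2 : ((x :: m) ++ [v]).length = Nat.find hne := by rw [← hm, hlen]
  simp only [length_append, length_cons, length_singleton] at h2
  omega

/-- In case (i), `x` has no arcs to or from `c` except with `y`. -/
lemma degZero (hloops : ∀ v, ¬ A v v) (hx : x ∉ c)
    (hnb : ¬ ∃ p, IsBypass A c p ∧ x ∈ p)
    (hto : ∃ u ∈ c, ∃ l, IsPathFromTo A l u x)
    (hfrom : ∃ v ∈ c, ∃ l, IsPathFromTo A l x v)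
    {y : V} (hy : y ∈ c) (hadj : DAdj A x y)
    {w : V} (hw : w ∈ c) (hwy : w ≠ y) : ¬ A x w ∧ ¬ A w x := by
  constructor
  · intro hxw
    rcases hadj with hxy | hyx
    · obtain ⟨u0, hu0p, l0, hl0⟩ := hto
      obtain ⟨u1, l1, hl1, _⟩ := exists_ctox hx hu0p hl0
      obtain ⟨mR, hmR, hu1c, _, _, _, _, _, _⟩ := ctox_elim hx hl1
      rw [hmR] at hl1
      by_cases hu1w : u1 = w
      · obtain ⟨w', _, h2⟩ := route_meet hx hnb hl1 (out2 hx hy hxy)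
          (by rw [hu1w]; exact hwy)
        simp at h2
      · obtain ⟨w', _, h2⟩ := route_meet hx hnb hl1 (out2 hx hw hxw) hu1w
        simp at h2
    · obtain ⟨w', _, h2⟩ := route_meet hx hnb (in2 hx hy hyx) (out2 hx hw hxw)
        (Ne.symm hwy)
      simp at h2
  · intro hwx
    rcases hadj with hxy | hyx
    · obtain ⟨w', h1, _⟩ := route_meet hx hnb (in2 hx hw hwx) (out2 hx hy hxy) hwy
      simp at h1
    · obtain ⟨v0, hv0p, l0, hl0⟩ := hfrom
      obtain ⟨v1, l1, hl1, _⟩ := exists_xtoc hx hv0p hl0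
      obtain ⟨mT, hmT, hv1c, _, _, _, _, _, _⟩ := xtoc_elim hx hl1
      rw [hmT] at hl1
      by_cases hv1w : v1 = w
      · obtain ⟨w', h1, _⟩ := route_meet hx hnb (in2 hx hy hyx) hl1
          (by rw [hv1w]; exact Ne.symm hwy)
        simp at h1
      · obtain ⟨w', h1, _⟩ := route_meet hx hnb (in2 hx hw hwx) hl1
          (fun h => hv1w h.symm)
        simp at h1

/-- In case (i), `D` is not 2-strongly connected. -/
lemma notTSC [Fintype V] (hloops : ∀ v, ¬ A v v) (hc : IsCycleOn A c) (hx : x ∉ c)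
    (hnb : ¬ ∃ p, IsBypass A c p ∧ x ∈ p)
    {y : V} (hy : y ∈ c) (hadj : DAdj A x y) : ¬ TwoStronglyConnected A := by
  rintro ⟨hcard, htsc⟩
  obtain ⟨hclen, hcnd, _, _⟩ := hc
  -- find z0 ∈ c with z0 ≠ y
  obtain ⟨z0, hz0c, hz0y⟩ : ∃ z0 ∈ c, z0 ≠ y := by
    rcases c with _ | ⟨a, _ | ⟨b, t⟩⟩
    · simp at hclen
    · simp at hclen
    · by_cases hay : a = y
      · refine ⟨b, by simp, ?_⟩
        rintro rfl
        rw [hay] at hcnd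
        simp at hcnd
      · exact ⟨a, by simp, hay⟩
  have hxy : x ≠ y := fun h => hx (h ▸ hy)
  have hz0x : z0 ≠ x := fun h => hx (h ▸ hz0c)
  rcases hadj with haxy | hayx
  · obtain ⟨l, hl, hyl⟩ := htsc y z0 x hz0y hxy hz0x
    obtain ⟨u1, l1, hl1, hsub⟩ := exists_ctox hx hz0c hl
    obtain ⟨mR, hmR, hu1c, _, _, _, _, _, _⟩ := ctox_elim hx hl1
    have hu1y : u1 ≠ y := by
      rintro rfl
      exact hyl (hsub u1 (by rw [hmR]; simp))
    rw [hmR] at hl1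
    obtain ⟨w', _, h2⟩ := route_meet hx hnb hl1 (out2 hx hy haxy) hu1y
    simp at h2
  · obtain ⟨l, hl, hyl⟩ := htsc y x z0 hxy hz0y (Ne.symm hz0x)
    obtain ⟨v1, l1, hl1, hsub⟩ := exists_xtoc hx hz0c hl
    obtain ⟨mT, hmT, hv1c, _, _, _, _, _, _⟩ := xtoc_elim hx hl1
    have hv1y : y ≠ v1 := by
      rintro rfl
      exact hyl (hsub y (by rw [hmT]; simp))
    rw [hmT] at hl1
    obtain ⟨w', h1, _⟩ := route_meet hx hnb (in2 hx hy hayx) hl1 hv1y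
    simp at h1

end PartI
section PartI2

open List Finset
open scoped Classical

variable {A : V → V → Prop} {c : List V} {x : V}

lemma partI_bound [Fintype V] (hloops : ∀ v, ¬ A v v) (hx : x ∉ c)
    (hnb : ¬ ∃ p, IsBypass A c p ∧ x ∈ p)
    (hto : ∃ u ∈ c, ∃ l, IsPathFromTo A l u x)
    (hfrom : ∃ v ∈ c, ∃ l, IsPathFromTo A l x v)
    {y : V} (hy : y ∈ c) (hadj : DAdj A x y)
    {z : V} (hz : z ∈ c) (hzy : z ≠ y) :
    deg A x + deg A z ≤ 2 * Fintype.card V - 2 := by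
  classical
  have hdz : ∀ w ∈ c, w ≠ y → ¬ A x w ∧ ¬ A w x := fun w hw hwy =>
    degZero hloops hx hnb hto hfrom hy hadj hw hwy
  have hxz : x ≠ z := fun h => hx (h ▸ hz)
  have hyx' : y ≠ x := fun h => hx (h ▸ hy)
  have hyz : y ≠ z := Ne.symm hzy
  have hc2 : ∀ w ∈ c, w ≠ y → arcCount A x z w ≤ 2 := fun w hw hwy =>
    arcCount_le_two (hdz w hw hwy).1 (hdz w hw hwy).2
  have hnxz := (hdz z hz hzy).1
  have hnzx := (hdz z hz hzy).2
  by_cases hxy : A x y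
  · by_cases hyx : A y x
    · -- case (i-a)
      have noT1 : ∀ w, w ∉ c → ¬ (A z w ∧ A w x) := by
        rintro w hwC ⟨hzw, hwx'⟩
        obtain ⟨w', _, h2⟩ := route_meet hx hnb
          (in3 hloops hx hz hwC hzw hwx') (out2 hx hy hxy) hzy
        simp at h2
      have noT2 : ∀ w, w ∉ c → ¬ (A x w ∧ A w z) := by
        rintro w hwC ⟨hxw', hwz'⟩
        obtain ⟨w', h1, _⟩ := route_meet hx hnb
          (in2 hx hy hyx) (out3 hloops hx hz hwC hxw' hwz') hyz
        simp at h1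
      refine count_bound hloops hxz hnxz hnzx {y}
        (by simp [Ne.symm hyx']) (by simp [hzy]) ?_ ?_
      · intro w hS hwx hwz
        rw [Finset.mem_singleton] at hS
        by_cases hwC : w ∈ c
        · exact hc2 w hwC hS
        by_contra hcon
        have h3 : 3 ≤ arcCount A x z w := by omega
        rcases arcCount_pattern' h3 with ⟨ha, hb, _⟩ | ⟨ha, hb, _⟩
        · exact noT1 w hwC ⟨ha, hb⟩
        · exact noT2 w hwC ⟨ha, hb⟩
      · rw [Finset.sum_singleton, Finset.card_singleton]
        exact le_trans (arcCount_le_four x z y) (by omega)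
    · -- case (i-b): A x y but not A y x
      obtain ⟨u0, mp, hP, hPmin⟩ := exists_min_ctox hx hto
      obtain ⟨huc, hmpc, hndP, hchP, hxmp, hump, hux⟩ := ctox_parts hx hP
      have hu0y : u0 = y := by
        by_contra h
        obtain ⟨w', _, h2⟩ := route_meet hx hnb hP (out2 hx hy hxy) h
        simp at h2
      have hmpne : mp ≠ [] := by
        rintro rfl
        have : A u0 x := isChain_pair.1 (by simpa [List.Chain'] using hchP)
        exact hyx (hu0y ▸ this)
      obtain ⟨sp, pt, hpt⟩ : ∃ s a, mp = s ++ [a] := by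
        rcases eq_nil_or_concat mp with h | ⟨s, a, h⟩
        · exact absurd h hmpne
        · exact ⟨s, a, by simpa [List.concat_eq_append] using h⟩
      have hptm : pt ∈ mp := by simp [hpt]
      have hptc : pt ∉ c := hmpc _ hptm
      have hptx : pt ≠ x := fun h => hxmp (h ▸ hptm)
      have hptz : pt ≠ z := fun h => hptc (h ▸ hz)
      have hpty : pt ≠ y := fun h => hptc (h ▸ hy)
      have noT1 : ∀ w, w ∉ c → ¬ (A z w ∧ A w x) := by
        rintro w hwC ⟨hzw, hwx'⟩
        obtain ⟨w', _, h2⟩ := route_meet hx hnb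
          (in3 hloops hx hz hwC hzw hwx') (out2 hx hy hxy) hzy
        simp at h2
      have hT2pt : ∀ w, w ∉ c → A x w → A w z → (A w x ∨ A z w) → w = pt := by
        intro w hwC hxw hwz hthird
        obtain ⟨w', h1, h2⟩ := route_meet hx hnb hP
          (out3 hloops hx hz hwC hxw hwz) (by rw [hu0y]; exact hyz)
        rw [List.mem_singleton] at h2
        rw [h2] at h1
        obtain ⟨s, t, hdec⟩ := append_of_mem h1
        rcases hthird with hwx' | hzw'
        · have hP' := ctox_exit hx (hdec ▸ hP) hwx'
          have := hPmin u0 _ hP'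
          have hlen : mp.length = s.length + 1 + t.length := by
            rw [hdec]; simp [length_append]; omega
          simp [length_append] at this
          have ht : t = [] := by rw [← length_eq_zero_iff]; omega
          rw [ht] at hdec
          have heq2 : (sp ++ [pt]).getLast? = (s ++ [w]).getLast? := by
            rw [← hpt, ← hdec]
          simp only [getLast?_concat, Option.some.injEq] at heq2
          exact heq2.symm
        · have hP' := ctox_skip hx (hdec ▸ hP) hz hzw'
          obtain ⟨w', _, h2⟩ := route_meet hx hnb hP' (out2 hx hy hxy) hzy
          simp at h2
      refine count_bound hloops hxz hnxz hnzx {pt, y}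
        (by simp [Ne.symm hptx, Ne.symm hyx']) (by simp [Ne.symm hptz, hzy]) ?_ ?_
      · intro w hS hwx hwz
        simp only [Finset.mem_insert, Finset.mem_singleton, not_or] at hS
        by_cases hwC : w ∈ c
        · exact hc2 w hwC hS.2
        by_contra hcon
        have h3 : 3 ≤ arcCount A x z w := by omega
        rcases arcCount_pattern' h3 with ⟨ha, hb, _⟩ | ⟨ha, hb, hthird⟩
        · exact noT1 w hwC ⟨ha, hb⟩
        · exact hS.1 (hT2pt w hwC ha hb hthird)
      · rw [Finset.sum_pair hpty, Finset.card_pair hpty]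
        have h1 : arcCount A x z pt ≤ 3 := by
          apply arcCount_le_three'
          rintro ⟨ha1, ha2, ha3, ha4⟩
          exact noT1 pt hptc ⟨ha3, ha2⟩
        have h2 : arcCount A x z y ≤ 3 := by
          apply arcCount_le_three'
          rintro ⟨ha1, ha2, ha3, ha4⟩
          exact hyx ha2
        omega
  · rcases hadj with hxy' | hyx
    · exact absurd hxy' hxy
    -- case (i-c): A y x but not A x y
    obtain ⟨v0, mq, hQ, hQmin⟩ := exists_min_xtoc hx hfrom
    obtain ⟨hvc, hmqc, hndQ, hchQ, hxmq, hvmq, hxv⟩ := xtoc_parts hx hQ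
    have hv0y : v0 = y := by
      by_contra h
      obtain ⟨w', h1, _⟩ := route_meet hx hnb (in2 hx hy hyx) hQ (fun hh => h hh.symm)
      simp at h1
    have hmqne : mq ≠ [] := by
      rintro rfl
      have : A x v0 := isChain_pair.1 (by simpa [List.Chain'] using hchQ)
      exact hxy (hv0y ▸ this)
    obtain ⟨q1, tq, hq1⟩ : ∃ a t, mq = a :: t := by
      rcases mq with _ | ⟨a, t⟩
      · exact absurd rfl hmqne
      · exact ⟨a, t, rfl⟩
    have hq1m : q1 ∈ mq := by simp [hq1]
    have hq1c : q1 ∉ c := hmqc _ hq1m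
    have hq1x : q1 ≠ x := fun h => hxmq (h ▸ hq1m)
    have hq1z : q1 ≠ z := fun h => hq1c (h ▸ hz)
    have hq1y : q1 ≠ y := fun h => hq1c (h ▸ hy)
    have noT2 : ∀ w, w ∉ c → ¬ (A x w ∧ A w z) := by
      rintro w hwC ⟨hxw', hwz'⟩
      obtain ⟨w', h1, _⟩ := route_meet hx hnb
        (in2 hx hy hyx) (out3 hloops hx hz hwC hxw' hwz') hyz
      simp at h1
    have hT1q1 : ∀ w, w ∉ c → A z w → A w x → (A x w ∨ A w z) → w = q1 := by
      intro w hwC hzw hwx' hthird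
      obtain ⟨w', h1, h2⟩ := route_meet hx hnb
        (in3 hloops hx hz hwC hzw hwx') hQ (by rw [hv0y]; exact hzy)
      rw [List.mem_singleton] at h1
      rw [h1] at h2
      obtain ⟨s, t, hdec⟩ := append_of_mem h2
      rcases hthird with hxw' | hwz'
      · have hQ' := xtoc_skip hx (hdec ▸ hQ) hxw'
        have := hQmin v0 _ hQ'
        have hlen : mq.length = s.length + 1 + t.length := by
          rw [hdec]; simp [length_append]; omega
        simp [length_append] at this
        have hs : s = [] := by rw [← length_eq_zero_iff]; omega
        rw [hs, nil_append, hq1] at hdec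
        exact (List.cons_eq_cons.1 hdec.symm).1
      · have hQ' := xtoc_exit hx (hdec ▸ hQ) hz hwz'
        obtain ⟨w', h1', _⟩ := route_meet hx hnb (in2 hx hy hyx) hQ' hyz
        simp at h1'
    refine count_bound hloops hxz hnxz hnzx {q1, y}
      (by simp [Ne.symm hq1x, Ne.symm hyx']) (by simp [Ne.symm hq1z, hzy]) ?_ ?_
    · intro w hS hwx hwz
      simp only [Finset.mem_insert, Finset.mem_singleton, not_or] at hS
      by_cases hwC : w ∈ c
      · exact hc2 w hwC hS.2
      by_contra hcon
      have h3 : 3 ≤ arcCount A x z w := by omega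
      rcases arcCount_pattern' h3 with ⟨ha, hb, hthird⟩ | ⟨ha, hb, _⟩
      · exact hS.1 (hT1q1 w hwC ha hb hthird)
      · exact noT2 w hwC ⟨ha, hb⟩
    · rw [Finset.sum_pair hq1y, Finset.card_pair hq1y]
      have h1 : arcCount A x z q1 ≤ 3 := by
        apply arcCount_le_three'
        rintro ⟨ha1, ha2, ha3, ha4⟩
        exact noT2 q1 hq1c ⟨ha1, ha4⟩
      have h2 : arcCount A x z y ≤ 3 := by
        apply arcCount_le_three'
        rintro ⟨ha1, ha2, ha3, ha4⟩
        exact hxy ha1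
      omega

end PartI2

/-- Lemma 3.5. -/
theorem no_bypass_degree_bounds [Fintype V] (A : V → V → Prop)
    (hloops : ∀ v, ¬ A v v)
    (c : List V) (hc : IsCycleOn A c) (hnonham : ∃ v : V, v ∉ c)
    (x : V) (hx : x ∉ c)
    (hto : ∃ u ∈ c, ∃ l, IsPathFromTo A l u x)
    (hfrom : ∃ v ∈ c, ∃ l, IsPathFromTo A l x v)
    (hnobypass : ¬ ∃ p, IsBypass A c p ∧ x ∈ p) :
    (∀ y ∈ c, DAdj A x y →
      ¬ TwoStronglyConnected A ∧ degOn A x ({v | v ∈ c} \ {y}) = 0 ∧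
        ∀ z ∈ c, z ≠ y → deg A x + deg A z ≤ 2 * Fintype.card V - 2) ∧
    ((∀ y ∈ c, ¬ DAdj A x y) →
      ∀ (u : V) (pl : List V), IsCtoXPath A c pl u x →
        (∀ (u' : V) (l' : List V), IsCtoXPath A c l' u' x →
          pl.length ≤ l'.length) →
      ∀ (v : V) (ql : List V), IsXtoCPath A c ql x v →
        (∀ (v' : V) (l' : List V), IsXtoCPath A c l' x v' →
          ql.length ≤ l'.length) →
      (u ≠ v → ∃ e ∈ ({u, v} : Set V), ∀ z ∈ c, z ≠ e →
          deg A x + deg A z ≤ 2 * Fintype.card V - 2) ∧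
      (u = v → ∀ z ∈ c, z ≠ u →
          deg A x + deg A z ≤ 2 * Fintype.card V - 2)) := by
  constructor
  · intro y hy hadj
    refine ⟨notTSC hloops hc hx hnobypass hy hadj, ?_, ?_⟩
    · have h1 : {w | (w ∈ c ∧ ¬ w = y) ∧ A x w} = (∅ : Set V) := by
        rw [Set.eq_empty_iff_forall_notMem]
        rintro w ⟨⟨hwc, hwy⟩, hxw⟩
        exact (degZero hloops hx hnobypass hto hfrom hy hadj hwc hwy).1 hxw
      have h2 : {w | (w ∈ c ∧ ¬ w = y) ∧ A w x} = (∅ : Set V) := by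
        rw [Set.eq_empty_iff_forall_notMem]
        rintro w ⟨⟨hwc, hwy⟩, hwx⟩
        exact (degZero hloops hx hnobypass hto hfrom hy hadj hwc hwy).2 hwx
      simp [degOn, outDegOn, inDegOn, h1, h2]
    · intro z hz hzy
      exact partI_bound hloops hx hnobypass hto hfrom hy hadj hz hzy
  · intro hnadj u pl hpl hplmin v ql hql hqlmin
    obtain ⟨mp, hmpeq, _, _, _, _, _, _, _⟩ := ctox_elim hx hpl
    obtain ⟨mq, hmqeq, _, _, _, _, _, _, _⟩ := xtoc_elim hx hql
    have hpllen : pl.length = mp.length + 2 := by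
      rw [hmpeq]; simp
    have hqllen : ql.length = mq.length + 2 := by
      rw [hmqeq]; simp
    have hP : IsCtoXPath A c ((u :: mp) ++ [x]) u x := hmpeq ▸ hpl
    have hQ : IsXtoCPath A c ((x :: mq) ++ [v]) x v := hmqeq ▸ hql
    have hPmin : ∀ (u' : V) (l' : List V), IsCtoXPath A c l' u' x →
        mp.length + 2 ≤ l'.length := by
      intro u' l' h
      rw [← hpllen]
      exact hplmin u' l' h
    have hQmin : ∀ (v' : V) (l' : List V), IsXtoCPath A c l' x v' →
        mq.length + 2 ≤ l'.length := by
      intro v' l' h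
      rw [← hqllen]
      exact hqlmin v' l' h
    constructor
    · intro huv
      rcases partII_exc hloops hx hnobypass hnadj hP hPmin hQ hQmin huv with hbu | hbv
      · refine ⟨v, by simp, ?_⟩
        intro z hz hzv
        by_cases hzu : z = u
        · exact hzu ▸ hbu
        · exact partII_main hloops hx hnobypass hnadj hP hPmin hQ hQmin hz hzu hzv
      · refine ⟨u, by simp, ?_⟩
        intro z hz hzu
        by_cases hzv : z = v
        · exact hzv ▸ hbv
        · exact partII_main hloops hx hnobypass hnadj hP hPmin hQ hQmin hz hzu hzv
    · intro huv z hz hzu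
      exact partII_main hloops hx hnobypass hnadj hP hPmin hQ hQmin hz hzu
        (fun h => hzu (h.trans huv.symm))
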